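/- arXiv:2405.05199 — 3 statements merged into one kernel-verified Lean document; each statement's English description precedes it below -/
import Mathlib

section
/- Let C be a nodal curve without separating nodes and let S be a C1-set of nodes of C, i.e., a set of nodes such that for some (equivalently, any) p ∈ S, the set S \ {p} equals the set of separating nodes of the normalization of C at p. Then the property defining S is independent of the choice of p ∈ S: if p, q ∈ S are distinct, then S \ {q} equals the set of separating nodes of the normalization of C at q. Consequently, the set of nodes of C admits a unique partition into C1-sets. -/
/-!
STATEMENT 11: Let `C` be a (connected) nodal curve without separating nodes and let `S`
be a C1-set of nodes of `C`: a set of nodes such that for some `p ∈ S`, the set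
`S \ {p}` equals the set of separating nodes of the normalization of `C` at `p`.  Then
this property is independent of the choice of `p ∈ S`: for every `q ∈ S`, `S \ {q}`
equals the set of separating nodes of the normalization of `C` at `q`.  Consequently the
set of nodes of `C` admits a unique partition into C1-sets.

Per Caporaso–Viviani this is equivalently a statement about the dual graph: nodes of `C`
are edges of a connected multigraph `Γ` with no bridges ("no separating nodes");
normalizing at a node `p` is deleting the edge `p`; a separating node of the (possibly
disconnected) partial normalization is a bridge of the resulting graph (an edge whose
removal disconnects its endpoints).  We formalize the graph statement.
-/

namespace Stmt11

variable {V E : Type*} [Fintype V] [Fintype E]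

/-- Reachability using only edges in `S`. -/
def reach (ends : E → V × V) (S : Set E) (a b : V) : Prop :=
  Relation.ReflTransGen (fun x y => ∃ e ∈ S, ends e = (x, y) ∨ ends e = (y, x)) a b

/-- `e` is a bridge of the graph with edge set `S`: removing it disconnects its two
endpoints. -/
def IsBridge (ends : E → V × V) (S : Set E) (e : E) : Prop :=
  e ∈ S ∧ ¬ reach ends (S \ {e}) (ends e).1 (ends e).2

/-- `S` is a C1-set of edges: for some `p ∈ S`, `S \ {p}` is exactly the set of bridges
of the graph with the edge `p` deleted. -/
def C1Set (ends : E → V × V) (S : Set E) : Prop :=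
  ∃ p ∈ S, S \ {p} = {e | IsBridge ends ({p}ᶜ) e}

end Stmt11

namespace Stmt11Aux
open Stmt11

variable {V E : Type*}

/-- `e` crosses the cut `A`. -/
def crosses (ends : E → V × V) (A : Set V) (e : E) : Prop :=
  ¬ ((ends e).1 ∈ A ↔ (ends e).2 ∈ A)

/-- `{p, q}` is a 2-edge cut: some vertex set whose crossing edges are exactly `p,q`. -/
def sep (ends : E → V × V) (p q : E) : Prop :=
  ∃ A : Set V, ∀ g, crosses ends A g ↔ (g = p ∨ g = q)

lemma reach_iff_mem {ends : E → V × V} {S : Set E} {A : Set V}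
    (h : ∀ e ∈ S, ((ends e).1 ∈ A ↔ (ends e).2 ∈ A)) {a b : V}
    (hr : reach ends S a b) : a ∈ A ↔ b ∈ A := by
  induction hr with
  | refl => exact Iff.rfl
  | tail _ hstep ih =>
    obtain ⟨e, he, h1 | h2⟩ := hstep
    · have := h e he; rw [h1] at this; exact ih.trans this
    · have := h e he; rw [h2] at this; exact ih.trans this.symm

lemma exists_crossing {ends : E → V × V} {S : Set E} {A : Set V} {a b : V}
    (hr : reach ends S a b) (ha : a ∈ A) (hb : b ∉ A) :
    ∃ e ∈ S, crosses ends A e := by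
  by_contra h
  push_neg at h
  have := reach_iff_mem (fun e he => not_not.mp (h e he)) hr
  exact hb (this.mp ha)

lemma sep_symm {ends : E → V × V} {p q : E} (h : sep ends p q) : sep ends q p := by
  obtain ⟨A, hA⟩ := h
  exact ⟨A, fun g => (hA g).trans or_comm⟩

lemma not_sep_self {ends : E → V × V} (hnosep : ∀ e : E, ¬ IsBridge ends Set.univ e)
    (p : E) : ¬ sep ends p p := by
  rintro ⟨A, hA⟩
  refine hnosep p ⟨Set.mem_univ p, fun hr => ?_⟩
  have hmem : ∀ e ∈ Set.univ \ ({p} : Set E), ((ends e).1 ∈ A ↔ (ends e).2 ∈ A) := by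
    intro e he
    by_contra hc
    rcases (hA e).mp hc with h | h <;> exact he.2 h
  exact ((hA p).mpr (Or.inl rfl)) (reach_iff_mem hmem hr)

lemma not_reach_of_sep {ends : E → V × V} {p q : E} (h : sep ends p q) :
    ¬ reach ends (({p} : Set E)ᶜ \ {q}) (ends q).1 (ends q).2 := by
  obtain ⟨A, hA⟩ := h
  intro hr
  have hmem : ∀ e ∈ ({p} : Set E)ᶜ \ {q}, ((ends e).1 ∈ A ↔ (ends e).2 ∈ A) := by
    intro e he
    by_contra hc
    rcases (hA e).mp hc with h | h
    · exact he.1 h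
    · exact he.2 h
  exact ((hA q).mpr (Or.inr rfl)) (reach_iff_mem hmem hr)

lemma sep_of_not_reach {ends : E → V × V} (hnosep : ∀ e : E, ¬ IsBridge ends Set.univ e)
    {p q : E} (hpq : q ≠ p)
    (h : ¬ reach ends (({p} : Set E)ᶜ \ {q}) (ends q).1 (ends q).2) : sep ends p q := by
  classical
  set S : Set E := ({p} : Set E)ᶜ \ {q} with hSdef
  set A : Set V := {v | reach ends S (ends q).1 v} with hAdef
  have hstep : ∀ e ∈ S, ∀ x, x ∈ A → ∀ y,
      (ends e = (x, y) ∨ ends e = (y, x)) → y ∈ A := by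
    intro e he x hx y hxy
    exact Relation.ReflTransGen.tail hx ⟨e, he, hxy⟩
  have hclosed : ∀ e ∈ S, ((ends e).1 ∈ A ↔ (ends e).2 ∈ A) := by
    intro e he
    constructor
    · intro hx; exact hstep e he _ hx _ (Or.inl rfl)
    · intro hx; exact hstep e he _ hx _ (Or.inr rfl)
  have hq1 : (ends q).1 ∈ A := Relation.ReflTransGen.refl
  have hq2 : (ends q).2 ∉ A := h
  refine ⟨A, fun g => ?_⟩
  by_cases hgq : g = q
  · subst hgq
    unfold crosses
    simp [hq1, hq2]
  by_cases hgp : g = p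
  · subst hgp
    constructor
    · intro _; exact Or.inl rfl
    intro _
    -- g = p crosses A, using bridgelessness at q
    have hqbr : reach ends (Set.univ \ ({q} : Set E)) (ends q).1 (ends q).2 := by
      by_contra hc
      exact hnosep q ⟨Set.mem_univ q, hc⟩
    obtain ⟨e, he, hce⟩ := exists_crossing hqbr hq1 hq2
    have heg : e = g := by
      by_contra hne
      have heS : e ∈ S := ⟨hne, he.2⟩
      exact hce (hclosed e heS)
    rwa [heg] at hce
  · have hgS : g ∈ S := ⟨hgp, hgq⟩
    have := hclosed g hgS
    constructor
    · intro hc; exact absurd this hc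
    · rintro (h | h) <;> [exact absurd h hgp; exact absurd h hgq]

lemma bridge_iff_sep {ends : E → V × V} (hnosep : ∀ e : E, ¬ IsBridge ends Set.univ e)
    {p q : E} : IsBridge ends (({p} : Set E)ᶜ) q ↔ sep ends p q := by
  constructor
  · rintro ⟨hq, hr⟩
    exact sep_of_not_reach hnosep hq hr
  · intro h
    have hqp : q ≠ p := fun hh => not_sep_self hnosep p (hh ▸ h)
    exact ⟨hqp, not_reach_of_sep h⟩

lemma eq_or_iff {α : Type*} {e f g x : α} (hef : e ≠ f) (hfg : f ≠ g) (heg : e ≠ g) :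
    (x = e ∨ x = g) ↔ ¬ ((x = e ∨ x = f) ↔ (x = f ∨ x = g)) := by
  by_cases h1 : x = e <;> by_cases h2 : x = f <;> by_cases h3 : x = g <;> simp_all

lemma xor_helper (a b c d : Prop) :
    (¬ ((a ↔ b) ↔ (c ↔ d))) ↔ ¬ ((¬ (a ↔ c)) ↔ ¬ (b ↔ d)) := by tauto

lemma sep_trans {ends : E → V × V} (hnosep : ∀ e : E, ¬ IsBridge ends Set.univ e)
    {e f g : E} (h1 : sep ends e f) (h2 : sep ends f g) (heg : e ≠ g) :
    sep ends e g := by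
  have hef : e ≠ f := fun hh => not_sep_self hnosep f (hh ▸ h1)
  have hfg : f ≠ g := fun hh => not_sep_self hnosep g (hh ▸ h2)
  obtain ⟨A, hA⟩ := h1
  obtain ⟨A', hA'⟩ := h2
  refine ⟨{v | v ∈ A ↔ v ∈ A'}, fun x => ?_⟩
  have t1 := hA x
  have t2 := hA' x
  unfold crosses at t1 t2 ⊢
  simp only [Set.mem_setOf_eq]
  rw [eq_or_iff hef hfg heg, ← t1, ← t2]
  exact xor_helper _ _ _ _

/-- The equivalence class of `p`. -/
def cls (ends : E → V × V) (p : E) : Set E := {e | e = p ∨ sep ends p e}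

lemma cls_eq_of_mem {ends : E → V × V} (hnosep : ∀ e : E, ¬ IsBridge ends Set.univ e)
    {p q : E} (hq : q ∈ cls ends p) : cls ends p = cls ends q := by
  rcases hq with rfl | hpq
  · rfl
  ext x
  simp only [cls, Set.mem_setOf_eq]
  constructor
  · rintro (rfl | hx)
    · exact Or.inr (sep_symm hpq)
    · by_cases hxq : x = q
      · exact Or.inl hxq
      · exact Or.inr (sep_trans hnosep (sep_symm hpq) hx (Ne.symm hxq))
  · rintro (rfl | hx)
    · exact Or.inr hpq
    · by_cases hxp : x = p
      · exact Or.inl hxp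
      · exact Or.inr (sep_trans hnosep hpq hx (Ne.symm hxp))

lemma cls_sdiff {ends : E → V × V} (hnosep : ∀ e : E, ¬ IsBridge ends Set.univ e)
    (q : E) : cls ends q \ {q} = {e | IsBridge ends (({q} : Set E)ᶜ) e} := by
  ext x
  simp only [cls, Set.mem_diff, Set.mem_setOf_eq, Set.mem_singleton_iff,
    bridge_iff_sep hnosep]
  constructor
  · rintro ⟨rfl | hx, hxq⟩
    · exact absurd rfl hxq
    · exact hx
  · intro hx
    refine ⟨Or.inr hx, ?_⟩
    rintro rfl
    exact not_sep_self hnosep _ hx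

lemma c1_eq_cls {ends : E → V × V} (hnosep : ∀ e : E, ¬ IsBridge ends Set.univ e)
    {S : Set E} (hS : C1Set ends S) {q : E} (hq : q ∈ S) : S = cls ends q := by
  obtain ⟨p, hp, hSp⟩ := hS
  have hScls : S = cls ends p := by
    have : S = insert p (S \ {p}) := by
      rw [Set.insert_diff_singleton, Set.insert_eq_self.mpr hp]
    rw [this, hSp]
    ext x
    simp only [Set.mem_insert_iff, Set.mem_setOf_eq, cls, bridge_iff_sep hnosep]
  rw [hScls]
  exact cls_eq_of_mem hnosep (hScls ▸ hq)

end Stmt11Aux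

open Stmt11 in
theorem stmt_11 {V E : Type*} [Fintype V] [Fintype E] (ends : E → V × V)
    -- `Γ` is connected
    (hconn : ∀ a b : V, reach ends Set.univ a b)
    -- `Γ` has no separating nodes (no bridges)
    (hnosep : ∀ e : E, ¬ IsBridge ends Set.univ e)
    (S : Set E) (hS : C1Set ends S) :
    -- the defining property of a C1-set holds for every choice of `q ∈ S`
    (∀ q ∈ S, S \ {q} = {e | IsBridge ends ({q}ᶜ) e}) ∧
    -- and the edge set admits a unique partition into C1-sets
    (∀ e : E, ∃! T : Set E, C1Set ends T ∧ e ∈ T) := by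
  classical
  constructor
  · intro q hq
    rw [Stmt11Aux.c1_eq_cls hnosep hS hq, Stmt11Aux.cls_sdiff hnosep q]
  · intro e
    refine ⟨Stmt11Aux.cls ends e,
      ⟨⟨e, Or.inl rfl, Stmt11Aux.cls_sdiff hnosep e⟩, Or.inl rfl⟩, ?_⟩
    rintro T ⟨hT, heT⟩
    exact Stmt11Aux.c1_eq_cls hnosep hT heT
end

section
/- Let Γ be a stable n-pointed dual graph of genus g, and suppose Γ₀ ⇝ Γ₁ is a degeneration of stable dual graphs with v ∈ V(Γ₀) degenerating to the complete subgraph M_v ⊆ Γ₁. If v is a separating rational m-bridge of Γ₀ (i.e., v has genus 0, no legs, m ≥ 1 edges to its complement, and Γ₀ \ v has exactly m connected components, matching the number of edges), then M_v is a separating rational m-bridge of Γ₁. Conversely, if M_v is a separating rational m-bridge of Γ₁, then v is a separating rational m-bridge of Γ₀. Hence the assignment Γ ↦ {separating rational multibridges of Γ} is an extremal assignment. -/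
/-!
STATEMENT 12: Let `Γ` be a stable `n`-pointed dual graph of genus `g`, and let
`Γ₀ ⇝ Γ₁` be a degeneration of stable dual graphs, with `v ∈ V(Γ₀)` degenerating to the
complete subgraph `M_v ⊆ Γ₁` (the preimage of `v` under the contraction).  If `v` is a
separating rational `m`-bridge of `Γ₀` (genus 0, no legs, `m` edges to its complement,
complement with exactly `m` connected components), then `M_v` is a separating rational
`m`-bridge of `Γ₁`; and conversely.  Hence the assignment
`Γ ↦ {vertices lying on separating rational multibridges of Γ}` is an extremal
assignment: it takes `Aut`-invariant proper subsets of `V(Γ)` and is compatible with all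
degenerations.

Dual graphs are modelled as genus-labelled multigraphs with legs; degenerations are
modelled combinatorially (a vertex contraction `φ : V(Γ₁) → V(Γ₀)` with connected fibers
and a matching of the persisting edges, legs and genera), as induced by a family of
stable curves over a DVR.
-/

namespace Stmt12

/-- Reachability in a multigraph using only edges in `S`. -/
def reach {V E : Type} (ends : E → V × V) (S : Set E) (a b : V) : Prop :=
  Relation.ReflTransGen (fun x y => ∃ e ∈ S, ends e = (x, y) ∨ ends e = (y, x)) a b

/-- Number of connected components of the subgraph with vertices `W` and edge set `S`. -/
noncomputable def numComponents {V E : Type} (ends : E → V × V) (W : Set V)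
    (S : Set E) : ℕ :=
  Nat.card (Quot (fun a b : W => reach ends S (a : V) (b : V)))

/-- Edges with both endpoints in `W`. -/
def edgesIn {V E : Type} (ends : E → V × V) (W : Set V) : Set E :=
  {e | (ends e).1 ∈ W ∧ (ends e).2 ∈ W}

/-- Edges between `W` and `T`. -/
def crossEdges {V E : Type} (ends : E → V × V) (W T : Set V) : Set E :=
  {e | ((ends e).1 ∈ W ∧ (ends e).2 ∈ T) ∨ ((ends e).1 ∈ T ∧ (ends e).2 ∈ W)}

/-- A stable `n`-pointed dual graph: a finite connected multigraph with genus labels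
and `n` legs, satisfying the stability condition `2g(v) − 2 + val(v) > 0` at every
vertex. -/
structure StableGraph (n : ℕ) where
  V : Type
  E : Type
  finV : Fintype V
  finE : Fintype E
  ends : E → V × V
  genus : V → ℕ
  leg : Fin n → V
  conn : ∀ a b : V, reach ends Set.univ a b
  stable : ∀ v : V,
    2 < 2 * genus v + (({e | (ends e).1 = v} : Set E).ncard +
      ({e | (ends e).2 = v} : Set E).ncard + ({i | leg i = v} : Set (Fin n)).ncard)

attribute [instance] StableGraph.finV StableGraph.finE

/-- The total (arithmetic) genus of a dual graph: sum of the genus labels plus the first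
Betti number `#E − #V + 1`. -/
noncomputable def totalGenus {n : ℕ} (Γ : StableGraph n) : ℤ :=
  (∑ v : Γ.V, (Γ.genus v : ℤ)) + (Nat.card Γ.E : ℤ) - (Nat.card Γ.V : ℤ) + 1

/-- `W` is a separating rational multibridge of `Γ`: a nonempty proper set of genus-0
vertices carrying no legs, whose induced subgraph is a tree (connected with
`#V − 1` internal edges), such that the complement has exactly as many connected
components as there are edges from `W` to the complement. -/
def IsSepRatMultibridge {n : ℕ} (Γ : StableGraph n) (W : Set Γ.V) : Prop :=
  W.Nonempty ∧ W ≠ Set.univ ∧ (∀ w ∈ W, Γ.genus w = 0) ∧ (∀ i, Γ.leg i ∉ W) ∧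
    numComponents Γ.ends W (edgesIn Γ.ends W) = 1 ∧
    (edgesIn Γ.ends W).ncard + 1 = W.ncard ∧
    numComponents Γ.ends Wᶜ (edgesIn Γ.ends Wᶜ) = (crossEdges Γ.ends W Wᶜ).ncard

/-- A (combinatorial) degeneration `Γ₀ ⇝ Γ₁` of stable dual graphs, as induced by a
flat family of stable `n`-pointed curves over a DVR: a contraction `φ` on vertices with
connected fibers, an injective matching `ψ` of the edges of `Γ₀` with the non-contracted
edges of `Γ₁`, compatibility of endpoints and legs, and preservation of genus on each
fiber. -/
structure Degeneration {n : ℕ} (Γ₀ Γ₁ : StableGraph n) where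
  φ : Γ₁.V → Γ₀.V
  ψ : Γ₀.E → Γ₁.E
  ψinj : Function.Injective ψ
  ends_comm : ∀ e : Γ₀.E,
    (φ (Γ₁.ends (ψ e)).1, φ (Γ₁.ends (ψ e)).2) = Γ₀.ends e ∨
    (φ (Γ₁.ends (ψ e)).2, φ (Γ₁.ends (ψ e)).1) = Γ₀.ends e
  contracted : ∀ e : Γ₁.E, e ∉ Set.range ψ → φ (Γ₁.ends e).1 = φ (Γ₁.ends e).2
  fiber_conn : ∀ v : Γ₀.V,
    numComponents Γ₁.ends (φ ⁻¹' {v}) {e | e ∉ Set.range ψ ∧ (Γ₁.ends e).1 ∈ φ ⁻¹' {v}}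
      = 1
  genus_eq : ∀ v : Γ₀.V,
    (Γ₀.genus v : ℤ) = (∑ w : Γ₁.V, Set.indicator (φ ⁻¹' {v}) (fun w => (Γ₁.genus w : ℤ)) w) +
      (({e | e ∉ Set.range ψ ∧ (Γ₁.ends e).1 ∈ φ ⁻¹' {v}} : Set Γ₁.E).ncard : ℤ) -
      ((φ ⁻¹' {v}).ncard : ℤ) + 1
  leg_comm : ∀ i : Fin n, φ (Γ₁.leg i) = Γ₀.leg i

/-- An isomorphism of stable dual graphs. -/
structure GraphIso {n : ℕ} (Γ Γ' : StableGraph n) where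
  vEquiv : Γ.V ≃ Γ'.V
  eEquiv : Γ.E ≃ Γ'.E
  ends_comm : ∀ e : Γ.E,
    Γ'.ends (eEquiv e) = (vEquiv (Γ.ends e).1, vEquiv (Γ.ends e).2) ∨
    Γ'.ends (eEquiv e) = (vEquiv (Γ.ends e).2, vEquiv (Γ.ends e).1)
  genus_comm : ∀ v : Γ.V, Γ'.genus (vEquiv v) = Γ.genus v
  leg_comm : ∀ i : Fin n, vEquiv (Γ.leg i) = Γ'.leg i

/-- Smyth's extremal assignments (Definition 1.5): `Aut`-invariant proper subsets of the
vertex sets, compatible with all degenerations. -/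
def IsExtremalAssignment (g : ℤ) (n : ℕ)
    (Z : ∀ Γ : StableGraph n, Set Γ.V) : Prop :=
  (∀ Γ : StableGraph n, totalGenus Γ = g → Z Γ ≠ Set.univ) ∧
  (∀ Γ : StableGraph n, totalGenus Γ = g → ∀ σ : GraphIso Γ Γ, ∀ v : Γ.V,
    v ∈ Z Γ ↔ σ.vEquiv v ∈ Z Γ) ∧
  (∀ Γ₀ Γ₁ : StableGraph n, totalGenus Γ₀ = g → totalGenus Γ₁ = g →
    ∀ D : Degeneration Γ₀ Γ₁, ∀ v : Γ₀.V,
      v ∈ Z Γ₀ ↔ (D.φ ⁻¹' {v}) ⊆ Z Γ₁)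

/-- The assignment `Γ ↦ {vertices on separating rational multibridges}`. -/
def sepAssignment (n : ℕ) : ∀ Γ : StableGraph n, Set Γ.V :=
  fun Γ => {v | ∃ W : Set Γ.V, IsSepRatMultibridge Γ W ∧ v ∈ W}

set_option linter.unusedSectionVars false
set_option linter.unusedVariables false

section Basic
variable {V E : Type} {ends : E → V × V} {S T : Set E} {W : Set V} {a b c x y : V}

lemma step_symm (h : ∃ e ∈ S, ends e = (a, b) ∨ ends e = (b, a)) :
    ∃ e ∈ S, ends e = (b, a) ∨ ends e = (a, b) := by
  obtain ⟨e, he, h⟩ := h; exact ⟨e, he, h.symm⟩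

lemma reach_refl : reach ends S a a := Relation.ReflTransGen.refl

lemma reach_step (h : ∃ e ∈ S, ends e = (a, b) ∨ ends e = (b, a)) : reach ends S a b :=
  Relation.ReflTransGen.single h

lemma reach_symm (h : reach ends S a b) : reach ends S b a := by
  haveI : Std.Symm (fun x y : V => ∃ e ∈ S, ends e = (x, y) ∨ ends e = (y, x)) :=
    ⟨fun x y h => step_symm h⟩
  exact (Relation.ReflTransGen.stdSymm (r := fun x y : V => ∃ e ∈ S, ends e = (x, y) ∨ ends e = (y, x))).symm _ _ h

lemma reach_trans (h : reach ends S a b) (h' : reach ends S b c) : reach ends S a c :=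
  Relation.ReflTransGen.trans h h'

lemma reach_mono (hST : S ⊆ T) (h : reach ends S a b) : reach ends T a b := by
  refine Relation.ReflTransGen.mono ?_ _ _ h
  rintro x y ⟨e, he, h⟩; exact ⟨e, hST he, h⟩

lemma reach_equivalence : Equivalence (fun a b : W => reach ends S (a : V) (b : V)) :=
  ⟨fun _ => reach_refl, reach_symm, reach_trans⟩

lemma quot_mk_eq_iff {a b : W} :
    Quot.mk (fun a b : W => reach ends S (a : V) (b : V)) a =
      Quot.mk (fun a b : W => reach ends S (a : V) (b : V)) b ↔ reach ends S (a : V) (b : V) :=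
  Quot.eq.trans (reach_equivalence.eqvGen_iff)

instance quotFinite [Finite V] :
    Finite (Quot (fun a b : W => reach ends S (a : V) (b : V))) :=
  Finite.of_surjective (Quot.mk _) Quot.mk_surjective

lemma numComponents_le_of_subset [Finite V] (hST : S ⊆ T) :
    numComponents ends W T ≤ numComponents ends W S := by
  refine Nat.card_le_card_of_surjective
    (Quot.map id (fun a b h => reach_mono hST h)) ?_
  intro q; obtain ⟨a, rfl⟩ := Quot.exists_rep q; exact ⟨Quot.mk _ a, rfl⟩

lemma reach_empty_iff : reach ends (∅ : Set E) a b ↔ a = b := by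
  constructor
  · intro h; induction h with
    | refl => rfl
    | tail _ h ih => obtain ⟨e, he, _⟩ := h; exact absurd he (Set.notMem_empty e)
  · rintro rfl; exact reach_refl

lemma numComponents_empty [Finite V] : numComponents ends W (∅ : Set E) = W.ncard := by
  rw [numComponents, ← Nat.card_coe_set_eq]
  refine Nat.card_eq_of_bijective (Quot.lift (fun a : W => a)
    (fun a b h => Subtype.ext (reach_empty_iff.mp h))) ⟨?_, ?_⟩
  · intro p q hpq
    obtain ⟨a, rfl⟩ := Quot.exists_rep p; obtain ⟨b, rfl⟩ := Quot.exists_rep q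
    simp only [Quot.lift_mk] at hpq
    exact congrArg _ hpq
  · intro a; exact ⟨Quot.mk _ a, rfl⟩

lemma numComponents_pos [Finite V] (hW : W.Nonempty) (S : Set E) :
    0 < numComponents ends W S := by
  rw [numComponents, Nat.card_pos_iff]
  obtain ⟨a, ha⟩ := hW
  exact ⟨⟨Quot.mk _ ⟨a, ha⟩⟩, inferInstance⟩

lemma numComponents_eq_one_iff [Finite V] :
    numComponents ends W S = 1 ↔ W.Nonempty ∧ ∀ a b : W, reach ends S (a : V) (b : V) := by
  rw [numComponents, Nat.card_eq_one_iff_unique]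
  constructor
  · rintro ⟨hs, hn⟩
    obtain ⟨q⟩ := hn; obtain ⟨a, _⟩ := Quot.exists_rep q
    refine ⟨⟨a, a.2⟩, fun x y => quot_mk_eq_iff.mp (hs.allEq _ _)⟩
  · rintro ⟨⟨a, ha⟩, h⟩
    refine ⟨⟨fun p q => ?_⟩, ⟨Quot.mk _ ⟨a, ha⟩⟩⟩
    obtain ⟨x, rfl⟩ := Quot.exists_rep p; obtain ⟨y, rfl⟩ := Quot.exists_rep q
    exact quot_mk_eq_iff.mpr (h x y)

end Basic

section Counting
variable {V E : Type} {ends : E → V × V} {S T : Set E} {W : Set V} {a b c x y : V} {e : E}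

/-- Decomposition of a path when one edge is removed. -/
lemma reach_cases_remove (he : ends e = (x, y)) (h : reach ends S a b) :
    reach ends (S \ {e}) a b ∨
    (reach ends (S \ {e}) a x ∧ reach ends (S \ {e}) y b) ∨
    (reach ends (S \ {e}) a y ∧ reach ends (S \ {e}) x b) := by
  induction h with
  | refl => exact Or.inl reach_refl
  | @tail c d hac hstep ih =>
    obtain ⟨f, hf, hends⟩ := hstep
    by_cases hfe : f = e
    · subst hfe
      rw [he] at hends
      rcases hends with hends | hends
      · -- ends e = (c,d) : so x = c, y = d
        obtain ⟨rfl, rfl⟩ := Prod.mk.injEq .. ▸ hends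
        rcases ih with h1 | ⟨h1, h2⟩ | ⟨h1, h2⟩
        · exact Or.inr (Or.inl ⟨h1, reach_refl⟩)
        · exact Or.inr (Or.inl ⟨h1, reach_refl⟩)
        · exact Or.inl h1
      · obtain ⟨rfl, rfl⟩ := Prod.mk.injEq .. ▸ hends
        rcases ih with h1 | ⟨h1, h2⟩ | ⟨h1, h2⟩
        · exact Or.inr (Or.inr ⟨h1, reach_refl⟩)
        · exact Or.inl h1
        · exact Or.inr (Or.inr ⟨h1, reach_refl⟩)
    · have hstep' : reach ends (S \ {e}) c d := reach_step ⟨f, ⟨hf, hfe⟩, hends⟩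
      rcases ih with h1 | ⟨h1, h2⟩ | ⟨h1, h2⟩
      · exact Or.inl (reach_trans h1 hstep')
      · exact Or.inr (Or.inl ⟨h1, reach_trans h2 hstep'⟩)
      · exact Or.inr (Or.inr ⟨h1, reach_trans h2 hstep'⟩)

/-- If the endpoints of `e` stay connected without `e`, removing `e` does not change reach. -/
lemma reach_remove_of_reach (he : ends e = (x, y)) (hxy : reach ends (S \ {e}) x y)
    (h : reach ends S a b) : reach ends (S \ {e}) a b := by
  rcases reach_cases_remove he h with h1 | ⟨h1, h2⟩ | ⟨h1, h2⟩
  · exact h1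
  · exact reach_trans h1 (reach_trans hxy h2)
  · exact reach_trans h1 (reach_trans (reach_symm hxy) h2)

/-- Removing one edge with both endpoints in `W` increases the component count by at most 1. -/
lemma numComponents_remove_le [Finite V] (he : ends e = (x, y)) (hx : x ∈ W) (hy : y ∈ W) :
    numComponents ends W (S \ {e}) ≤ numComponents ends W S + 1 := by
  classical
  set r' := fun a b : W => reach ends (S \ {e}) (a : V) (b : V) with hr'
  set r := fun a b : W => reach ends S (a : V) (b : V) with hr
  have hmono : ∀ a b : W, r' a b → r a b := fun a b h => reach_mono Set.diff_subset h
  set u : Quot r' → Quot r := Quot.map id hmono with hu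
  set Y : Quot r' := Quot.mk r' ⟨y, hy⟩ with hY
  set v : Quot r' → Option (Quot r) := fun q => if q = Y then none else some (u q) with hv
  have hinj : Function.Injective v := by
    intro p q hpq
    by_cases hp : p = Y
    · by_cases hq : q = Y
      · exact hp.trans hq.symm
      · simp only [hv, if_pos hp, if_neg hq] at hpq; exact absurd hpq.symm (Option.some_ne_none _)
    · by_cases hq : q = Y
      · simp only [hv, if_neg hp, if_pos hq] at hpq; exact absurd hpq (Option.some_ne_none _)
      · simp only [hv, if_neg hp, if_neg hq, Option.some.injEq] at hpq
        obtain ⟨a, rfl⟩ := Quot.exists_rep p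
        obtain ⟨b, rfl⟩ := Quot.exists_rep q
        have hrab : r a b := quot_mk_eq_iff.mp hpq
        rcases reach_cases_remove he hrab with h1 | ⟨h1, h2⟩ | ⟨h1, h2⟩
        · exact quot_mk_eq_iff.mpr h1
        · exact absurd (quot_mk_eq_iff.mpr (show r' b ⟨y, hy⟩ from reach_symm h2)) hq
        · exact absurd (quot_mk_eq_iff.mpr (show r' a ⟨y, hy⟩ from h1)) hp
  haveI hfq : Finite (Quot r) := quotFinite
  haveI hfq' : Finite (Quot r') := quotFinite
  haveI : Fintype (Quot r) := Fintype.ofFinite _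
  haveI : Finite (Option (Quot r)) := Finite.of_fintype _
  calc Nat.card (Quot r') ≤ Nat.card (Option (Quot r)) := Nat.card_le_card_of_injective v hinj
    _ = Nat.card (Quot r) + 1 := Finite.card_option

/-- Removing a "bridge" strictly increases the component count. -/
lemma numComponents_remove_lt [Finite V] (he : ends e = (x, y)) (hx : x ∈ W) (hy : y ∈ W)
    (heS : e ∈ S) (hbr : ¬ reach ends (S \ {e}) x y) :
    numComponents ends W S < numComponents ends W (S \ {e}) := by
  classical
  set r' := fun a b : W => reach ends (S \ {e}) (a : V) (b : V) with hr'
  set r := fun a b : W => reach ends S (a : V) (b : V) with hr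
  have hmono : ∀ a b : W, r' a b → r a b := fun a b h => reach_mono Set.diff_subset h
  set u : Quot r' → Quot r := Quot.map id hmono with hu
  have hsurj : Function.Surjective u := by
    intro q; obtain ⟨a, rfl⟩ := Quot.exists_rep q; exact ⟨Quot.mk _ a, rfl⟩
  have hninj : ¬ Function.Injective u := by
    intro hinj
    have h1 : u (Quot.mk r' ⟨x, hx⟩) = u (Quot.mk r' ⟨y, hy⟩) := by
      simpa [hu, Quot.map] using quot_mk_eq_iff.mpr (show r ⟨x, hx⟩ ⟨y, hy⟩ from
        reach_step ⟨e, heS, Or.inl he⟩)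
    exact hbr (quot_mk_eq_iff.mp (hinj h1))
  have : Fintype (Quot r') := Fintype.ofFinite _
  have : Fintype (Quot r) := Fintype.ofFinite _
  rw [numComponents, numComponents, Nat.card_eq_fintype_card, Nat.card_eq_fintype_card]
  exact Fintype.card_lt_of_surjective_not_injective u hsurj hninj

/-- A connected-type lower bound: `#W ≤ c + #S` for `S ⊆ edgesIn W`. -/
lemma ncard_le_numComponents_add [Finite V] [Finite E] (hS : S ⊆ edgesIn ends W) :
    W.ncard ≤ numComponents ends W S + S.ncard := by
  classical
  refine Set.Finite.induction_on (motive := fun s _ => s ⊆ edgesIn ends W →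
    W.ncard ≤ numComponents ends W s + s.ncard) S (Set.toFinite S) ?_ ?_ hS
  · intro _; simp [numComponents_empty]
  · intro e s hes hsfin ih hS'
    have hs : s ⊆ edgesIn ends W := fun f hf => hS' (Set.mem_insert_of_mem _ hf)
    have hS := hS'
    have heW : e ∈ edgesIn ends W := hS (Set.mem_insert _ _)
    have hdiff : (insert e s) \ {e} = s := by
      ext f
      simp only [Set.mem_diff, Set.mem_insert_iff, Set.mem_singleton_iff]
      constructor
      · rintro ⟨h | h, hne⟩
        · exact absurd h hne
        · exact h
      · intro hf; exact ⟨Or.inr hf, fun h => hes (h ▸ hf)⟩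
    have h1 : numComponents ends W s ≤ numComponents ends W (insert e s) + 1 := by
      have := numComponents_remove_le (ends := ends) (W := W) (S := insert e s) (e := e)
        (x := (ends e).1) (y := (ends e).2) rfl heW.1 heW.2
      rwa [hdiff] at this
    calc W.ncard ≤ numComponents ends W s + s.ncard := ih hs
      _ ≤ numComponents ends W (insert e s) + 1 + s.ncard := by omega
      _ = numComponents ends W (insert e s) + (insert e s).ncard := by
          rw [Set.ncard_insert_of_notMem hes (Set.toFinite s)]; omega

/-- If every edge of `S` is a bridge relative to `S`, then `c + #S ≤ #W`. -/
lemma numComponents_add_le_of_bridges [Finite V] [Finite E] (hS : S ⊆ edgesIn ends W)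
    (hbr : ∀ e ∈ S, ¬ reach ends (S \ {e}) (ends e).1 (ends e).2) :
    numComponents ends W S + S.ncard ≤ W.ncard := by
  classical
  refine Set.Finite.induction_on (motive := fun s _ => s ⊆ edgesIn ends W →
    (∀ e ∈ s, ¬ reach ends (s \ {e}) (ends e).1 (ends e).2) →
    numComponents ends W s + s.ncard ≤ W.ncard) S (Set.toFinite S) ?_ ?_ hS hbr
  · intro _ _; simp [numComponents_empty]
  · intro e s hes hsfin ih hS' hbr'
    have hs : s ⊆ edgesIn ends W := fun f hf => hS' (Set.mem_insert_of_mem _ hf)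
    have hS := hS'
    have hbr := hbr'
    have heW : e ∈ edgesIn ends W := hS (Set.mem_insert _ _)
    have hdiff : (insert e s) \ {e} = s := by
      ext f
      simp only [Set.mem_diff, Set.mem_insert_iff, Set.mem_singleton_iff]
      constructor
      · rintro ⟨h | h, hne⟩
        · exact absurd h hne
        · exact h
      · intro hf; exact ⟨Or.inr hf, fun h => hes (h ▸ hf)⟩
    have h1 : numComponents ends W (insert e s) < numComponents ends W s := by
      have := numComponents_remove_lt (ends := ends) (W := W) (S := insert e s) (e := e)
        (x := (ends e).1) (y := (ends e).2) rfl heW.1 heW.2 (Set.mem_insert _ _)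
        (hdiff ▸ hbr e (Set.mem_insert _ _))
      rwa [hdiff] at this
    have h2 : ∀ f ∈ s, ¬ reach ends (s \ {f}) (ends f).1 (ends f).2 := by
      intro f hf hr
      exact hbr f (Set.mem_insert_of_mem _ hf)
        (reach_mono (Set.diff_subset_diff_left (Set.subset_insert _ _)) hr)
    calc numComponents ends W (insert e s) + (insert e s).ncard
        = numComponents ends W (insert e s) + 1 + s.ncard := by
          rw [Set.ncard_insert_of_notMem hes (Set.toFinite s)]; omega
      _ ≤ numComponents ends W s + s.ncard := by omega
      _ ≤ W.ncard := ih hs h2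


end Counting

section MB
variable {V E : Type} {ends : E → V × V} {S T : Set E} {W : Set V} {a b x y w cc : V} {e f : E}

open Classical in
/-- The `Wᶜ`-endpoint of a cross edge. -/
noncomputable def cEnd (ends : E → V × V) (W : Set V) (e : E) : V :=
  if (ends e).1 ∈ W then (ends e).2 else (ends e).1

open Classical in
/-- The `W`-endpoint of a cross edge. -/
noncomputable def wEnd (ends : E → V × V) (W : Set V) (e : E) : V :=
  if (ends e).1 ∈ W then (ends e).1 else (ends e).2

lemma ends_eta : ends e = ((ends e).1, (ends e).2) := rfl

lemma cEnd_eq (hends : ends e = (w, cc) ∨ ends e = (cc, w)) (hw : w ∈ W) (hc : cc ∉ W) :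
    cEnd ends W e = cc ∧ wEnd ends W e = w := by
  classical
  rcases hends with h | h
  · simp only [cEnd, wEnd, h]
    exact ⟨if_pos hw, if_pos hw⟩
  · simp only [cEnd, wEnd, h]
    exact ⟨if_neg hc, if_neg hc⟩

lemma cross_spec (he : e ∈ crossEdges ends W Wᶜ) :
    wEnd ends W e ∈ W ∧ cEnd ends W e ∉ W ∧
      (ends e = (wEnd ends W e, cEnd ends W e) ∨ ends e = (cEnd ends W e, wEnd ends W e)) := by
  rcases he with ⟨h1, h2⟩ | ⟨h1, h2⟩
  · have h := cEnd_eq (W := W) (Or.inl (ends_eta)) h1 h2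
    rw [h.1, h.2]
    exact ⟨h1, h2, Or.inl rfl⟩
  · have h := cEnd_eq (W := W) (Or.inr (ends_eta)) h2 h1
    rw [h.1, h.2]
    exact ⟨h2, h1, Or.inr rfl⟩

lemma cross_not_edgesIn (he : e ∈ crossEdges ends W Wᶜ) : e ∉ edgesIn ends W := by
  rintro ⟨h1, h2⟩
  rcases he with ⟨_, hc⟩ | ⟨hc, _⟩ <;> exact hc ‹_›

lemma cross_not_edgesIn_compl (he : e ∈ crossEdges ends W Wᶜ) : e ∉ edgesIn ends Wᶜ := by
  rintro ⟨h1, h2⟩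
  rcases he with ⟨hc, _⟩ | ⟨_, hc⟩
  · exact h1 hc
  · exact h2 hc

lemma mem_cross_of_ends (hends : ends e = (w, cc) ∨ ends e = (cc, w)) (hw : w ∈ W)
    (hc : cc ∉ W) : e ∈ crossEdges ends W Wᶜ := by
  rcases hends with h | h
  · exact Or.inl (by rw [h]; exact ⟨hw, hc⟩)
  · exact Or.inr (by rw [h]; exact ⟨hc, hw⟩)

/-- First-exit: a path from `a ∉ W` into `W` first crosses via some cross edge. -/
lemma first_exit (hb : b ∈ W) (h : reach ends S a b) (ha : a ∉ W) :
    ∃ e ∈ S, e ∈ crossEdges ends W Wᶜ ∧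
      reach ends (S ∩ edgesIn ends Wᶜ) a (cEnd ends W e) := by
  revert ha
  induction h using Relation.ReflTransGen.head_induction_on with
  | refl => intro ha; exact absurd hb ha
  | @head p q hpq hqb ih =>
    intro hp
    by_cases hq : q ∈ W
    · obtain ⟨e, heS, hends⟩ := hpq
      have hcross : e ∈ crossEdges ends W Wᶜ :=
        mem_cross_of_ends (w := q) (cc := p) (by tauto) hq hp
      have hce : cEnd ends W e = p := (cEnd_eq (w := q) (cc := p) (by tauto) hq hp).1
      exact ⟨e, heS, hcross, hce ▸ reach_refl⟩
    · obtain ⟨e, heS, hcr, hre⟩ := ih hq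
      refine ⟨e, heS, hcr, reach_trans (reach_step ?_) hre⟩
      obtain ⟨f, hfS, hends⟩ := hpq
      refine ⟨f, ⟨hfS, ?_⟩, hends⟩
      rcases hends with h | h <;> exact ⟨by rw [h]; exact (by first | exact hp | exact hq),
        by rw [h]; exact (by first | exact hq | exact hp)⟩

lemma numComponents_congr (h : ∀ p q : V, p ∈ W → q ∈ W → (reach ends S p q ↔ reach ends T p q)) :
    numComponents ends W S = numComponents ends W T := by
  have hrel : (fun p q : W => reach ends S (p : V) (q : V)) =
      (fun p q : W => reach ends T (p : V) (q : V)) := by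
    funext p q
    exact propext (h p q p.2 q.2)
  unfold numComponents
  rw [hrel]

lemma numComponents_singleton [Finite V] {v : V} (S : Set E) :
    numComponents ends ({v} : Set V) S = 1 := by
  rw [numComponents_eq_one_iff]
  refine ⟨⟨v, rfl⟩, fun a b => ?_⟩
  have ha : (a : V) = v := a.2
  have hb : (b : V) = v := b.2
  rw [ha, hb]
  exact reach_refl

end MB
section Core
variable {V E : Type} [Fintype V] [Fintype E] {ends : E → V × V} {W : Set V}
  {S : Set E} {e f : E} {v x y : V}

/-- No self-loops at vertices of a tree-like `W`. -/
lemma no_loop (htc : numComponents ends W (edgesIn ends W) = 1)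
    (hcard : (edgesIn ends W).ncard + 1 = W.ncard)
    {w : V} (hw : w ∈ W) (he : ends e = (w, w)) : False := by
  have heW : e ∈ edgesIn ends W := ⟨by rw [he]; exact hw, by rw [he]; exact hw⟩
  have hrr : ∀ p q : V, reach ends (edgesIn ends W) p q ↔
      reach ends (edgesIn ends W \ {e}) p q :=
    fun p q => ⟨reach_remove_of_reach he reach_refl, reach_mono Set.diff_subset⟩
  have h1 : numComponents ends W (edgesIn ends W \ {e}) = 1 := by
    rw [← numComponents_congr (T := edgesIn ends W \ {e}) (fun p q _ _ => hrr p q)]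
    exact htc
  have h2 := ncard_le_numComponents_add (W := W) (S := edgesIn ends W \ {e})
    Set.diff_subset
  rw [h1] at h2
  have h3 : (edgesIn ends W \ {e}).ncard = (edgesIn ends W).ncard - 1 :=
    Set.ncard_diff_singleton_of_mem heW
  have hpos : 0 < (edgesIn ends W).ncard := (Set.ncard_pos (Set.toFinite _)).mpr ⟨e, heW⟩
  omega

/-- Minimality of the tree `W`: removing an internal edge disconnects its endpoints. -/
lemma tree_min (htc : numComponents ends W (edgesIn ends W) = 1)
    (hcard : (edgesIn ends W).ncard + 1 = W.ncard) (heW : e ∈ edgesIn ends W) :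
    ¬ reach ends (edgesIn ends W \ {e}) (ends e).1 (ends e).2 := by
  intro hr
  have hrr : ∀ p q : V, reach ends (edgesIn ends W) p q ↔
      reach ends (edgesIn ends W \ {e}) p q :=
    fun p q => ⟨reach_remove_of_reach rfl hr, reach_mono Set.diff_subset⟩
  have h1 : numComponents ends W (edgesIn ends W \ {e}) = 1 := by
    rw [← numComponents_congr (T := edgesIn ends W \ {e}) (fun p q _ _ => hrr p q)]
    exact htc
  have h2 := ncard_le_numComponents_add (W := W) (S := edgesIn ends W \ {e})
    Set.diff_subset
  rw [h1] at h2
  have h3 : (edgesIn ends W \ {e}).ncard = (edgesIn ends W).ncard - 1 :=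
    Set.ncard_diff_singleton_of_mem heW
  have hpos : 0 < (edgesIn ends W).ncard := (Set.ncard_pos (Set.toFinite _)).mpr ⟨e, heW⟩
  omega

/-- Each component of the complement carries a unique cross edge. -/
lemma cross_unique (hconn : ∀ a b : V, reach ends Set.univ a b) (hW : W.Nonempty)
    (hcomp : numComponents ends Wᶜ (edgesIn ends Wᶜ) = (crossEdges ends W Wᶜ).ncard)
    (he : e ∈ crossEdges ends W Wᶜ) (hf : f ∈ crossEdges ends W Wᶜ)
    (hr : reach ends (edgesIn ends Wᶜ) (cEnd ends W e) (cEnd ends W f)) : e = f := by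
  classical
  let r := fun p q : (Wᶜ : Set V) => reach ends (edgesIn ends Wᶜ) (p : V) (q : V)
  let β : (crossEdges ends W Wᶜ : Set E) → Quot r :=
    fun g => Quot.mk r ⟨cEnd ends W g, (cross_spec g.2).2.1⟩
  have hsurj : Function.Surjective β := by
    intro q
    obtain ⟨⟨a, ha⟩, rfl⟩ := Quot.exists_rep q
    obtain ⟨b, hb⟩ := hW
    obtain ⟨g, _, hgcr, hgr⟩ := first_exit hb (hconn a b) ha
    exact ⟨⟨g, hgcr⟩,
      quot_mk_eq_iff.mpr (reach_symm (reach_mono Set.inter_subset_right hgr))⟩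
  have hcardeq : Nat.card (crossEdges ends W Wᶜ : Set E) = Nat.card (Quot r) := by
    rw [Nat.card_coe_set_eq, ← hcomp]
    rfl
  have hbij := (Nat.bijective_iff_surjective_and_card β).mpr ⟨hsurj, hcardeq⟩
  have hβef : β ⟨e, he⟩ = β ⟨f, hf⟩ := quot_mk_eq_iff.mpr hr
  exact congrArg Subtype.val (hbij.injective hβef)

/-- The projection to the tree `W`, collapsing each complement component to the
`W`-endpoint of its unique cross edge. -/
lemma exists_proj (hconn : ∀ a b : V, reach ends Set.univ a b) (hW : W.Nonempty)
    (hcomp : numComponents ends Wᶜ (edgesIn ends Wᶜ) = (crossEdges ends W Wᶜ).ncard) :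
    ∃ π : V → V, (∀ p ∈ W, π p = p) ∧
      (∀ g ∈ crossEdges ends W Wᶜ, π (cEnd ends W g) = wEnd ends W g) ∧
      (∀ (S : Set E) (a b : V), reach ends S a b →
        reach ends (edgesIn ends W ∩ S) (π a) (π b)) := by
  classical
  let r := fun p q : (Wᶜ : Set V) => reach ends (edgesIn ends Wᶜ) (p : V) (q : V)
  let β : (crossEdges ends W Wᶜ : Set E) → Quot r :=
    fun g => Quot.mk r ⟨cEnd ends W g, (cross_spec g.2).2.1⟩
  have hsurj : Function.Surjective β := by
    intro q
    obtain ⟨⟨a, ha⟩, rfl⟩ := Quot.exists_rep q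
    obtain ⟨b, hb⟩ := hW
    obtain ⟨g, _, hgcr, hgr⟩ := first_exit hb (hconn a b) ha
    exact ⟨⟨g, hgcr⟩,
      quot_mk_eq_iff.mpr (reach_symm (reach_mono Set.inter_subset_right hgr))⟩
  have hcardeq : Nat.card (crossEdges ends W Wᶜ : Set E) = Nat.card (Quot r) := by
    rw [Nat.card_coe_set_eq, ← hcomp]
    rfl
  have hbij := (Nat.bijective_iff_surjective_and_card β).mpr ⟨hsurj, hcardeq⟩
  set π : V → V := fun p =>
    if hp : p ∈ W then p
    else wEnd ends W ((Function.surjInv hsurj (Quot.mk r ⟨p, hp⟩) : (crossEdges ends W Wᶜ : Set E)) : E)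
    with hπ
  have hπW : ∀ p ∈ W, π p = p := fun p hp => by simp [hπ, hp]
  -- component constancy
  have hconst : ∀ p q : V, (hp : p ∉ W) → (hq : q ∉ W) →
      reach ends (edgesIn ends Wᶜ) p q → π p = π q := by
    intro p q hp hq hpq
    have : Quot.mk r ⟨p, hp⟩ = Quot.mk r ⟨q, hq⟩ := quot_mk_eq_iff.mpr hpq
    simp only [hπ, dif_neg hp, dif_neg hq, this]
  have hπcross : ∀ g ∈ crossEdges ends W Wᶜ, π (cEnd ends W g) = wEnd ends W g := by
    intro g hg
    have hc : cEnd ends W g ∉ W := (cross_spec hg).2.1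
    have h1 : β (Function.surjInv hsurj (Quot.mk r ⟨cEnd ends W g, hc⟩)) =
        Quot.mk r ⟨cEnd ends W g, hc⟩ := Function.surjInv_eq hsurj _
    have h2 : β ⟨g, hg⟩ = Quot.mk r ⟨cEnd ends W g, hc⟩ := rfl
    have h3 : Function.surjInv hsurj (Quot.mk r ⟨cEnd ends W g, hc⟩) = ⟨g, hg⟩ :=
      hbij.injective (h1.trans h2.symm)
    simp only [hπ, dif_neg hc, h3]
  refine ⟨π, hπW, hπcross, ?_⟩
  intro S a b h
  induction h with
  | refl => exact reach_refl
  | @tail p q hap hstep ih =>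
    refine reach_trans ih ?_
    obtain ⟨g, hgS, hends⟩ := hstep
    by_cases hp : p ∈ W <;> by_cases hq : q ∈ W
    · -- internal edge
      have hgW : g ∈ edgesIn ends W := by
        rcases hends with h | h <;> rw [edgesIn, Set.mem_setOf_eq, h] <;> exact ⟨‹_›, ‹_›⟩
      rw [hπW p hp, hπW q hq]
      exact reach_step ⟨g, ⟨hgW, hgS⟩, hends⟩
    · -- cross edge from p ∈ W to q ∉ W
      have hcr : g ∈ crossEdges ends W Wᶜ := mem_cross_of_ends hends hp hq
      have h1 := cEnd_eq (W := W) hends hp hq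
      have := hπcross g hcr
      rw [h1.1, h1.2] at this
      rw [hπW p hp, this]
      exact reach_refl
    · -- cross edge from p ∉ W to q ∈ W
      have hcr : g ∈ crossEdges ends W Wᶜ := mem_cross_of_ends (w := q) (cc := p)
        (by tauto) hq hp
      have h1 := cEnd_eq (W := W) (w := q) (cc := p) (by tauto) hq hp
      have := hπcross g hcr
      rw [h1.1, h1.2] at this
      rw [hπW q hq, this]
      exact reach_refl
    · -- both outside W
      have hgc : g ∈ edgesIn ends Wᶜ := by
        rcases hends with h | h <;> rw [edgesIn, Set.mem_setOf_eq, h] <;>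
          exact ⟨‹_›, ‹_›⟩
      have := hconst p q hp hq (reach_step ⟨g, hgc, hends⟩)
      rw [this]
      exact reach_refl

/-- Every edge incident to a separating rational multibridge is a bridge. -/
lemma mb_bridge (hconn : ∀ a b : V, reach ends Set.univ a b) (hW : W.Nonempty)
    (htc : numComponents ends W (edgesIn ends W) = 1)
    (hcard : (edgesIn ends W).ncard + 1 = W.ncard)
    (hcomp : numComponents ends Wᶜ (edgesIn ends Wᶜ) = (crossEdges ends W Wᶜ).ncard)
    (hx : x ∈ W) (hends : ends e = (x, y) ∨ ends e = (y, x))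
    (hr : reach ends (Set.univ \ {e}) x y) : False := by
  by_cases hy : y ∈ W
  · have heW : e ∈ edgesIn ends W := by
      rcases hends with h | h <;> rw [edgesIn, Set.mem_setOf_eq, h] <;> exact ⟨‹_›, ‹_›⟩
    obtain ⟨π, hπW, hπcross, hπpush⟩ := exists_proj hconn hW hcomp
    have h2 := hπpush _ x y hr
    rw [hπW x hx, hπW y hy] at h2
    have hsub : edgesIn ends W ∩ (Set.univ \ {e}) ⊆ edgesIn ends W \ {e} := by
      rintro g ⟨hg1, _, hg2⟩
      exact ⟨hg1, hg2⟩
    have h3 : reach ends (edgesIn ends W \ {e}) x y := reach_mono hsub h2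
    have := tree_min htc hcard heW
    rcases hends with h | h
    · rw [h] at this
      exact this h3
    · rw [h] at this
      exact this (reach_symm h3)
  · have hcr : e ∈ crossEdges ends W Wᶜ := mem_cross_of_ends hends hx hy
    have hce : cEnd ends W e = y := (cEnd_eq (W := W) hends hx hy).1
    obtain ⟨g, hgS, hgcr, hgr⟩ := first_exit hx (reach_symm hr) hy
    have hge : g ≠ e := hgS.2
    have : reach ends (edgesIn ends Wᶜ) (cEnd ends W g) (cEnd ends W e) := by
      rw [hce]
      exact reach_symm (reach_mono Set.inter_subset_right hgr)
    exact hge (cross_unique hconn hW hcomp hgcr hcr this)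

end Core
section MBR
variable {V E : Type} [Fintype V] [Fintype E] {ends : E → V × V} {W : Set V}
  {e f : E} {v x y : V}

/-- The combinatorial content of being a separating rational multibridge. -/
def MBr (ends : E → V × V) (W : Set V) : Prop :=
  W.Nonempty ∧ W ≠ Set.univ ∧
    numComponents ends W (edgesIn ends W) = 1 ∧
    (edgesIn ends W).ncard + 1 = W.ncard ∧
    numComponents ends Wᶜ (edgesIn ends Wᶜ) = (crossEdges ends W Wᶜ).ncard

lemma comp_eq_cross_of_unique (hconn : ∀ a b : V, reach ends Set.univ a b)
    (hW : W.Nonempty)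
    (hbr : ∀ e ∈ crossEdges ends W Wᶜ, ∀ f ∈ crossEdges ends W Wᶜ,
      reach ends (edgesIn ends Wᶜ) (cEnd ends W e) (cEnd ends W f) → e = f) :
    numComponents ends Wᶜ (edgesIn ends Wᶜ) = (crossEdges ends W Wᶜ).ncard := by
  classical
  let r := fun p q : (Wᶜ : Set V) => reach ends (edgesIn ends Wᶜ) (p : V) (q : V)
  let β : (crossEdges ends W Wᶜ : Set E) → Quot r :=
    fun g => Quot.mk r ⟨cEnd ends W g, (cross_spec g.2).2.1⟩
  have hsurj : Function.Surjective β := by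
    intro q
    obtain ⟨⟨a, ha⟩, rfl⟩ := Quot.exists_rep q
    obtain ⟨b, hb⟩ := hW
    obtain ⟨g, _, hgcr, hgr⟩ := first_exit hb (hconn a b) ha
    exact ⟨⟨g, hgcr⟩,
      quot_mk_eq_iff.mpr (reach_symm (reach_mono Set.inter_subset_right hgr))⟩
  have hinj : Function.Injective β := by
    rintro ⟨g, hg⟩ ⟨g', hg'⟩ h
    exact Subtype.ext (hbr g hg g' hg' (quot_mk_eq_iff.mp h))
  have : Nat.card (crossEdges ends W Wᶜ : Set E) = Nat.card (Quot r) :=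
    Nat.card_eq_of_bijective β ⟨hinj, hsurj⟩
  rw [Nat.card_coe_set_eq] at this
  exact this.symm

/-- A vertex of a separating rational multibridge is itself one. -/
lemma MBr_singleton (hconn : ∀ a b : V, reach ends Set.univ a b) (h : MBr ends W)
    (hv : v ∈ W) : MBr ends ({v} : Set V) := by
  obtain ⟨hW, hWp, htc, hcard, hcomp⟩ := h
  have hloop : ∀ e : E, ends e = (v, v) → False := fun e he => no_loop htc hcard hv he
  have hedges : edgesIn ends ({v} : Set V) = ∅ := by
    ext e
    simp only [edgesIn, Set.mem_setOf_eq, Set.mem_singleton_iff, Set.mem_empty_iff_false,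
      iff_false, not_and]
    intro h1 h2
    exact hloop e (Prod.ext h1 h2)
  refine ⟨⟨v, rfl⟩, ?_, numComponents_singleton _, by rw [hedges]; simp, ?_⟩
  · obtain ⟨u, hu⟩ : ∃ u, u ∉ W := by
      by_contra hc
      push_neg at hc
      exact hWp (Set.eq_univ_of_forall hc)
    intro hc
    have : u ∈ ({v} : Set V) := hc ▸ Set.mem_univ u
    rw [Set.mem_singleton_iff] at this
    exact hu (this ▸ hv)
  · refine comp_eq_cross_of_unique hconn ⟨v, rfl⟩ ?_
    intro e he f hf hr
    by_contra hef
    -- build a path from v to the far endpoint of e avoiding e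
    have hYe : cEnd ends ({v} : Set V) e ∉ ({v} : Set V) := (cross_spec he).2.1
    have hYf : cEnd ends ({v} : Set V) f ∉ ({v} : Set V) := (cross_spec hf).2.1
    have hendse := (cross_spec he).2.2
    have hendsf := (cross_spec hf).2.2
    have hwe : wEnd ends ({v} : Set V) e = v := (cross_spec he).1
    have hwf : wEnd ends ({v} : Set V) f = v := (cross_spec hf).1
    rw [hwe] at hendse
    rw [hwf] at hendsf
    have hnotv : ∀ g ∈ edgesIn ends ({v} : Set V)ᶜ, g ≠ e :=
      fun g hg hge => cross_not_edgesIn_compl he (hge ▸ hg)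
    have hstepf : reach ends (Set.univ \ {e}) v (cEnd ends ({v} : Set V) f) :=
      reach_step ⟨f, ⟨Set.mem_univ f, fun h => hef (Set.mem_singleton_iff.mp h).symm⟩, by tauto⟩
    have hpath : reach ends (Set.univ \ {e}) v (cEnd ends ({v} : Set V) e) := by
      refine reach_trans hstepf (reach_mono ?_ (reach_symm hr))
      intro g hg
      exact ⟨Set.mem_univ g, hnotv g hg⟩
    exact mb_bridge hconn hW htc hcard hcomp hv hendse hpath

/-- Assembling singleton multibridges along a connected set yields a multibridge. -/
lemma MBr_assembly (hconn : ∀ a b : V, reach ends Set.univ a b) (hWne : W.Nonempty)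
    (hWp : W ≠ Set.univ) (hWconn : numComponents ends W (edgesIn ends W) = 1)
    (hsing : ∀ w ∈ W, MBr ends ({w} : Set V)) : MBr ends W := by
  have hreachW : ∀ a b : V, a ∈ W → b ∈ W → reach ends (edgesIn ends W) a b := by
    intro a b ha hb
    exact (numComponents_eq_one_iff.mp hWconn).2 ⟨a, ha⟩ ⟨b, hb⟩
  have hloops : ∀ (w : V), w ∈ W → ∀ e : E, ends e = (w, w) → False := by
    intro w hw e he
    obtain ⟨_, _, htc1, hcard1, _⟩ := hsing w hw
    exact no_loop htc1 hcard1 rfl he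
  have hbridge : ∀ e : E, (ends e).1 ∈ W →
      ¬ reach ends (Set.univ \ {e}) (ends e).1 (ends e).2 := by
    intro e hx hr
    obtain ⟨_, _, htc1, hcard1, hcomp1⟩ := hsing (ends e).1 hx
    exact mb_bridge (W := {(ends e).1}) hconn ⟨(ends e).1, rfl⟩ htc1 hcard1 hcomp1 rfl (Or.inl rfl) hr
  have hineq1 : ∀ g ∈ edgesIn ends W,
      ¬ reach ends (edgesIn ends W \ {g}) (ends g).1 (ends g).2 := by
    intro g hg hr
    exact hbridge g hg.1 (reach_mono (fun a ha => ⟨Set.mem_univ a, ha.2⟩) hr)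
  have hK := numComponents_add_le_of_bridges (W := W) (S := edgesIn ends W)
    (fun _ h => h) hineq1
  have hT := ncard_le_numComponents_add (W := W) (S := edgesIn ends W) (fun _ h => h)
  rw [hWconn] at hK hT
  refine ⟨hWne, hWp, hWconn, by omega, ?_⟩
  refine comp_eq_cross_of_unique hconn hWne ?_
  intro e he f hf hr
  by_contra hef
  have hspec_e := cross_spec he
  have hspec_f := cross_spec hf
  have hx : wEnd ends W e ∈ W := hspec_e.1
  have hstep1 : reach ends (Set.univ \ {e}) (wEnd ends W e) (wEnd ends W f) := by
    refine reach_mono ?_ (hreachW _ _ hx hspec_f.1)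
    intro g hg
    exact ⟨Set.mem_univ g, fun hge => cross_not_edgesIn he (hge ▸ hg)⟩
  have hstep2 : reach ends (Set.univ \ {e}) (wEnd ends W f) (cEnd ends W f) :=
    reach_step ⟨f, ⟨Set.mem_univ f, fun h => hef (Set.mem_singleton_iff.mp h).symm⟩, by tauto⟩
  have hstep3 : reach ends (Set.univ \ {e}) (cEnd ends W f) (cEnd ends W e) := by
    refine reach_mono ?_ (reach_symm hr)
    intro g hg
    exact ⟨Set.mem_univ g, fun hge => cross_not_edgesIn_compl he (hge ▸ hg)⟩
  have hpath := reach_trans hstep1 (reach_trans hstep2 hstep3)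
  obtain ⟨_, _, htc1, hcard1, hcomp1⟩ := hsing (wEnd ends W e) hx
  exact mb_bridge (W := {wEnd ends W e}) hconn ⟨wEnd ends W e, rfl⟩ htc1 hcard1 hcomp1 rfl
    (by tauto) hpath

/-- If every singleton is a multibridge, the graph is a tree: `#E + 1 ≤ #V`. -/
lemma card_bound_of_all_singletons (hconn : ∀ a b : V, reach ends Set.univ a b)
    (hV : Nonempty V) (hall : ∀ v : V, MBr ends ({v} : Set V)) :
    Nat.card E + 1 ≤ Nat.card V := by
  have hbr : ∀ e ∈ (Set.univ : Set E),
      ¬ reach ends ((Set.univ : Set E) \ {e}) (ends e).1 (ends e).2 := by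
    intro e _ hr
    obtain ⟨_, _, htc1, hcard1, hcomp1⟩ := hall (ends e).1
    exact mb_bridge (W := {(ends e).1}) hconn ⟨(ends e).1, rfl⟩ htc1 hcard1 hcomp1 rfl (Or.inl rfl) hr
  have hK := numComponents_add_le_of_bridges (W := (Set.univ : Set V))
    (S := (Set.univ : Set E)) (fun g _ => ⟨Set.mem_univ _, Set.mem_univ _⟩) hbr
  have hpos := numComponents_pos (ends := ends) (W := (Set.univ : Set V))
    (Set.univ_nonempty) (Set.univ : Set E)
  rw [Set.ncard_univ, Set.ncard_univ] at hK
  omega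

end MBR
section DEG
variable {n : ℕ} {Γ₀ Γ₁ : StableGraph n} (D : Degeneration Γ₀ Γ₁) (v : Γ₀.V)

/-- The fiber over `v`. -/
abbrev fib : Set Γ₁.V := D.φ ⁻¹' {v}
/-- Contracted edges inside the fiber over `v`. -/
abbrev conEdges : Set Γ₁.E := {e | e ∉ Set.range D.ψ ∧ (Γ₁.ends e).1 ∈ D.φ ⁻¹' {v}}

lemma fib_nonempty (u : Γ₀.V) : (fib D u).Nonempty :=
  (numComponents_eq_one_iff.mp (D.fiber_conn u)).1

lemma mem_fib {a : Γ₁.V} : a ∈ fib D v ↔ D.φ a = v := Iff.rfl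

lemma conEdges_subset : conEdges D v ⊆ edgesIn Γ₁.ends (fib D v) := by
  rintro e ⟨hne, h1⟩
  exact ⟨h1, by rw [mem_fib, ← D.contracted e hne]; exact h1⟩

lemma fib_reach {a b : Γ₁.V} (ha : D.φ a = v) (hb : D.φ b = v) :
    reach Γ₁.ends (conEdges D v) a b :=
  (numComponents_eq_one_iff.mp (D.fiber_conn v)).2 ⟨a, ha⟩ ⟨b, hb⟩

lemma psi_cross_iff (e : Γ₀.E) :
    D.ψ e ∈ crossEdges Γ₁.ends (fib D v) (fib D v)ᶜ ↔
      e ∈ crossEdges Γ₀.ends ({v} : Set Γ₀.V) ({v} : Set Γ₀.V)ᶜ := by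
  have hmem1 : D.ψ e ∈ crossEdges Γ₁.ends (fib D v) (fib D v)ᶜ ↔
      ((D.φ (Γ₁.ends (D.ψ e)).1 = v ∧ ¬ D.φ (Γ₁.ends (D.ψ e)).2 = v) ∨
       (¬ D.φ (Γ₁.ends (D.ψ e)).1 = v ∧ D.φ (Γ₁.ends (D.ψ e)).2 = v)) := by
    simp [crossEdges, Set.mem_compl_iff, Set.mem_preimage, Set.mem_singleton_iff]
  have hmem0 : e ∈ crossEdges Γ₀.ends ({v} : Set Γ₀.V) ({v} : Set Γ₀.V)ᶜ ↔
      (((Γ₀.ends e).1 = v ∧ ¬ (Γ₀.ends e).2 = v) ∨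
       (¬ (Γ₀.ends e).1 = v ∧ (Γ₀.ends e).2 = v)) := by
    simp [crossEdges, Set.mem_compl_iff, Set.mem_singleton_iff]
  rw [hmem1, hmem0]
  rcases D.ends_comm e with h | h
  · have h1 : D.φ (Γ₁.ends (D.ψ e)).1 = (Γ₀.ends e).1 := by rw [← h]
    have h2 : D.φ (Γ₁.ends (D.ψ e)).2 = (Γ₀.ends e).2 := by rw [← h]
    rw [← h1, ← h2]
  · have h1 : D.φ (Γ₁.ends (D.ψ e)).2 = (Γ₀.ends e).1 := by rw [← h]
    have h2 : D.φ (Γ₁.ends (D.ψ e)).1 = (Γ₀.ends e).2 := by rw [← h]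
    rw [← h1, ← h2]
    tauto

lemma cross_image :
    D.ψ '' crossEdges Γ₀.ends ({v} : Set Γ₀.V) ({v} : Set Γ₀.V)ᶜ =
      crossEdges Γ₁.ends (fib D v) (fib D v)ᶜ := by
  ext f
  constructor
  · rintro ⟨e, he, rfl⟩
    exact (psi_cross_iff D v e).mpr he
  · intro hf
    have hrange : f ∈ Set.range D.ψ := by
      by_contra hnr
      have := D.contracted f hnr
      rcases hf with ⟨h1, h2⟩ | ⟨h1, h2⟩
      · rw [Set.mem_compl_iff, mem_fib] at h2
        rw [mem_fib] at h1
        exact h2 (this ▸ h1)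
      · rw [Set.mem_compl_iff, mem_fib] at h1
        rw [mem_fib] at h2
        exact h1 (this.symm ▸ h2)
    obtain ⟨e, rfl⟩ := hrange
    exact ⟨e, (psi_cross_iff D v e).mp hf, rfl⟩

lemma cross_card :
    (crossEdges Γ₀.ends ({v} : Set Γ₀.V) ({v} : Set Γ₀.V)ᶜ).ncard =
      (crossEdges Γ₁.ends (fib D v) (fib D v)ᶜ).ncard := by
  rw [← cross_image D v, Set.ncard_image_of_injective _ D.ψinj]

lemma push_reach {a b : Γ₁.V}
    (h : reach Γ₁.ends (edgesIn Γ₁.ends (fib D v)ᶜ) a b) :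
    reach Γ₀.ends (edgesIn Γ₀.ends ({v} : Set Γ₀.V)ᶜ) (D.φ a) (D.φ b) := by
  induction h with
  | refl => exact reach_refl
  | @tail p q hap hstep ih =>
    refine reach_trans ih ?_
    obtain ⟨g, hg, hends⟩ := hstep
    by_cases hr : g ∈ Set.range D.ψ
    · obtain ⟨e, rfl⟩ := hr
      have hcomm := D.ends_comm e
      have h1 : (Γ₁.ends (D.ψ e)).1 ∈ (fib D v)ᶜ := hg.1
      have h2 : (Γ₁.ends (D.ψ e)).2 ∈ (fib D v)ᶜ := hg.2
      rw [Set.mem_compl_iff, mem_fib] at h1 h2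
      have heIn : e ∈ edgesIn Γ₀.ends ({v} : Set Γ₀.V)ᶜ := by
        rcases hcomm with h | h
        · rw [edgesIn, Set.mem_setOf_eq, ← h]
          exact ⟨h1, h2⟩
        · rw [edgesIn, Set.mem_setOf_eq, ← h]
          exact ⟨h2, h1⟩
      refine reach_step ⟨e, heIn, ?_⟩
      rcases hends with h' | h' <;> rcases hcomm with h | h <;>
        rw [← h, h'] <;> tauto
    · have := D.contracted g hr
      have hpq : D.φ p = D.φ q := by
        rcases hends with h' | h' <;> rw [h'] at this
        · exact this
        · exact this.symm
      rw [hpq]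
      exact reach_refl

lemma fib_reach_compl {u : Γ₀.V} (hu : u ≠ v) {a b : Γ₁.V} (ha : D.φ a = u)
    (hb : D.φ b = u) : reach Γ₁.ends (edgesIn Γ₁.ends (fib D v)ᶜ) a b := by
  refine reach_mono ?_ (fib_reach D u ha hb)
  intro g hg
  have h2 := (conEdges_subset D u) hg
  exact ⟨fun hc => hu ((h2.1 : D.φ _ = u).symm.trans (hc : D.φ _ = v)),
    fun hc => hu ((h2.2 : D.φ _ = u).symm.trans (hc : D.φ _ = v))⟩

lemma lift_reach {u u' : Γ₀.V} (h : reach Γ₀.ends (edgesIn Γ₀.ends ({v} : Set Γ₀.V)ᶜ) u u')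
    (hu : u ≠ v) :
    ∀ a b : Γ₁.V, D.φ a = u → D.φ b = u' →
      reach Γ₁.ends (edgesIn Γ₁.ends (fib D v)ᶜ) a b := by
  induction h with
  | refl => exact fun a b ha hb => fib_reach_compl D v hu ha hb
  | @tail z u' hz hstep ih =>
    intro a b ha hb
    obtain ⟨e, he, hends⟩ := hstep
    have hz1 : z ≠ v ∧ u' ≠ v := by
      rcases hends with h' | h' <;> rw [edgesIn, Set.mem_setOf_eq, h'] at he <;>
        · simp only [Set.mem_compl_iff, Set.mem_singleton_iff] at he
          tauto
    have hcomm := D.ends_comm e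
    -- find endpoints of ψ e in the right fibers
    obtain ⟨p, q, hψends, hp, hq⟩ : ∃ p q : Γ₁.V,
        (Γ₁.ends (D.ψ e) = (p, q) ∨ Γ₁.ends (D.ψ e) = (q, p)) ∧ D.φ p = z ∧ D.φ q = u' := by
      rcases hcomm with h' | h' <;> rcases hends with h'' | h'' <;>
        rw [h''] at h'
      · exact ⟨(Γ₁.ends (D.ψ e)).1, (Γ₁.ends (D.ψ e)).2, Or.inl rfl,
          congrArg Prod.fst h', congrArg Prod.snd h'⟩
      · exact ⟨(Γ₁.ends (D.ψ e)).2, (Γ₁.ends (D.ψ e)).1, Or.inr rfl,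
          congrArg Prod.snd h', congrArg Prod.fst h'⟩
      · exact ⟨(Γ₁.ends (D.ψ e)).2, (Γ₁.ends (D.ψ e)).1, Or.inr rfl,
          congrArg Prod.fst h', congrArg Prod.snd h'⟩
      · exact ⟨(Γ₁.ends (D.ψ e)).1, (Γ₁.ends (D.ψ e)).2, Or.inl rfl,
          congrArg Prod.snd h', congrArg Prod.fst h'⟩
    have hψIn : D.ψ e ∈ edgesIn Γ₁.ends (fib D v)ᶜ := by
      rcases hψends with h' | h' <;> rw [edgesIn, Set.mem_setOf_eq, h']
      · exact ⟨fun hc => hz1.1 (hp ▸ hc), fun hc => hz1.2 (hq ▸ hc)⟩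
      · exact ⟨fun hc => hz1.2 (hq ▸ hc), fun hc => hz1.1 (hp ▸ hc)⟩
    refine reach_trans (ih a p ha hp) (reach_trans (reach_step ⟨D.ψ e, hψIn, ?_⟩)
      (fib_reach_compl D v hz1.2 hq hb))
    tauto

lemma comp_compl_eq :
    numComponents Γ₁.ends (fib D v)ᶜ (edgesIn Γ₁.ends (fib D v)ᶜ) =
      numComponents Γ₀.ends ({v} : Set Γ₀.V)ᶜ (edgesIn Γ₀.ends ({v} : Set Γ₀.V)ᶜ) := by
  let r₁ := fun p q : ((fib D v)ᶜ : Set Γ₁.V) =>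
    reach Γ₁.ends (edgesIn Γ₁.ends (fib D v)ᶜ) (p : Γ₁.V) (q : Γ₁.V)
  let r₀ := fun p q : (({v} : Set Γ₀.V)ᶜ : Set Γ₀.V) =>
    reach Γ₀.ends (edgesIn Γ₀.ends ({v} : Set Γ₀.V)ᶜ) (p : Γ₀.V) (q : Γ₀.V)
  have hmem : ∀ a : ((fib D v)ᶜ : Set Γ₁.V), D.φ (a : Γ₁.V) ∈ (({v} : Set Γ₀.V)ᶜ) :=
    fun a => a.2
  let F : Quot r₁ → Quot r₀ :=
    Quot.lift (fun a => Quot.mk r₀ ⟨D.φ (a : Γ₁.V), hmem a⟩)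
      (fun a b h => quot_mk_eq_iff.mpr (push_reach D v h))
  have hsurj : Function.Surjective F := by
    intro q
    obtain ⟨⟨u, hu⟩, rfl⟩ := Quot.exists_rep q
    obtain ⟨a, ha⟩ := fib_nonempty D u
    have ha' : a ∈ ((fib D v)ᶜ : Set Γ₁.V) := by
      rw [Set.mem_compl_iff, mem_fib]
      rw [mem_fib] at ha
      rw [ha]
      exact hu
    refine ⟨Quot.mk r₁ ⟨a, ha'⟩, ?_⟩
    have : D.φ a = u := ha
    simp only [F, Quot.lift_mk]
    congr 1
    exact Subtype.ext this
  have hinj : Function.Injective F := by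
    intro p q h
    obtain ⟨⟨a, ha⟩, rfl⟩ := Quot.exists_rep p
    obtain ⟨⟨b, hb⟩, rfl⟩ := Quot.exists_rep q
    have h' : reach Γ₀.ends (edgesIn Γ₀.ends ({v} : Set Γ₀.V)ᶜ) (D.φ a) (D.φ b) :=
      quot_mk_eq_iff.mp h
    exact quot_mk_eq_iff.mpr (lift_reach D v h' ha a b rfl rfl)
  exact Nat.card_eq_of_bijective F ⟨hinj, hsurj⟩

end DEG
section DEG2
variable {n : ℕ} {Γ₀ Γ₁ : StableGraph n} (D : Degeneration Γ₀ Γ₁) (v : Γ₀.V)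

lemma genus_forward (hg : Γ₀.genus v = 0)
    (hnl : edgesIn Γ₀.ends ({v} : Set Γ₀.V) = ∅) :
    (∀ w ∈ fib D v, Γ₁.genus w = 0) ∧ edgesIn Γ₁.ends (fib D v) = conEdges D v ∧
      (conEdges D v).ncard + 1 = (fib D v).ncard := by
  have hgeq : ((Γ₀.genus v : ℕ) : ℤ) = (∑ w : Γ₁.V,
      Set.indicator (D.φ ⁻¹' {v}) (fun w => (Γ₁.genus w : ℤ)) w) +
      ((conEdges D v).ncard : ℤ) - ((fib D v).ncard : ℤ) + 1 := D.genus_eq v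
  rw [hg, Nat.cast_zero] at hgeq
  have hKsub := conEdges_subset D v
  have hT := ncard_le_numComponents_add (W := fib D v) (S := conEdges D v) hKsub
  rw [D.fiber_conn v] at hT
  have hsum0 : (0:ℤ) ≤ ∑ w : Γ₁.V,
      Set.indicator (D.φ ⁻¹' {v}) (fun w => (Γ₁.genus w : ℤ)) w :=
    Finset.sum_nonneg fun w _ => Set.indicator_nonneg (fun _ _ => Int.natCast_nonneg _) _
  have hKcard : (conEdges D v).ncard + 1 = (fib D v).ncard := by omega
  have hsum : (∑ w : Γ₁.V,
      Set.indicator (D.φ ⁻¹' {v}) (fun w => (Γ₁.genus w : ℤ)) w) = 0 := by omega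
  have hgen : ∀ w ∈ fib D v, Γ₁.genus w = 0 := by
    intro w hw
    have h := (Finset.sum_eq_zero_iff_of_nonneg
      (fun w _ => Set.indicator_nonneg (fun _ _ => Int.natCast_nonneg _) _)).mp hsum
        w (Finset.mem_univ w)
    rw [Set.indicator_of_mem hw] at h
    exact_mod_cast h
  refine ⟨hgen, ?_, hKcard⟩
  refine Set.Subset.antisymm ?_ hKsub
  intro f hf
  by_cases hr : f ∈ Set.range D.ψ
  · obtain ⟨e, rfl⟩ := hr
    exfalso
    have h1 : D.φ (Γ₁.ends (D.ψ e)).1 = v := hf.1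
    have h2 : D.φ (Γ₁.ends (D.ψ e)).2 = v := hf.2
    have : e ∈ edgesIn Γ₀.ends ({v} : Set Γ₀.V) := by
      rcases D.ends_comm e with h | h
      · have e1 : D.φ (Γ₁.ends (D.ψ e)).1 = (Γ₀.ends e).1 := by rw [← h]
        have e2 : D.φ (Γ₁.ends (D.ψ e)).2 = (Γ₀.ends e).2 := by rw [← h]
        exact ⟨by rw [← e1]; exact h1, by rw [← e2]; exact h2⟩
      · have e1 : D.φ (Γ₁.ends (D.ψ e)).2 = (Γ₀.ends e).1 := by rw [← h]
        have e2 : D.φ (Γ₁.ends (D.ψ e)).1 = (Γ₀.ends e).2 := by rw [← h]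
        exact ⟨by rw [← e1]; exact h2, by rw [← e2]; exact h1⟩
    rw [hnl] at this
    exact this
  · exact ⟨hr, hf.1⟩

lemma genus_backward (hgens : ∀ w ∈ fib D v, Γ₁.genus w = 0)
    (hcard : (edgesIn Γ₁.ends (fib D v)).ncard + 1 = (fib D v).ncard) :
    Γ₀.genus v = 0 ∧ edgesIn Γ₀.ends ({v} : Set Γ₀.V) = ∅ := by
  have hKsub := conEdges_subset D v
  have hT := ncard_le_numComponents_add (W := fib D v) (S := conEdges D v) hKsub
  rw [D.fiber_conn v] at hT
  have hle : (conEdges D v).ncard ≤ (edgesIn Γ₁.ends (fib D v)).ncard :=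
    Set.ncard_le_ncard hKsub (Set.toFinite _)
  have hKeq : conEdges D v = edgesIn Γ₁.ends (fib D v) :=
    Set.eq_of_subset_of_ncard_le hKsub (by omega) (Set.toFinite _)
  have hsum : (∑ w : Γ₁.V,
      Set.indicator (D.φ ⁻¹' {v}) (fun w => (Γ₁.genus w : ℤ)) w) = 0 := by
    refine Finset.sum_eq_zero fun w _ => ?_
    by_cases hw : w ∈ fib D v
    · rw [Set.indicator_of_mem hw]
      exact_mod_cast congrArg (Nat.cast : ℕ → ℤ) (hgens w hw)
    · exact Set.indicator_of_notMem hw _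
  have hgeq : ((Γ₀.genus v : ℕ) : ℤ) = (∑ w : Γ₁.V,
      Set.indicator (D.φ ⁻¹' {v}) (fun w => (Γ₁.genus w : ℤ)) w) +
      ((conEdges D v).ncard : ℤ) - ((fib D v).ncard : ℤ) + 1 := D.genus_eq v
  rw [hsum] at hgeq
  have hKcard : (conEdges D v).ncard = (edgesIn Γ₁.ends (fib D v)).ncard := by rw [hKeq]
  constructor
  · omega
  · ext e
    simp only [Set.mem_empty_iff_false, iff_false]
    intro he
    have h1 : (Γ₀.ends e).1 = v := he.1
    have h2 : (Γ₀.ends e).2 = v := he.2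
    have hmem : D.ψ e ∈ edgesIn Γ₁.ends (fib D v) := by
      rcases D.ends_comm e with h | h
      · have e1 : D.φ (Γ₁.ends (D.ψ e)).1 = (Γ₀.ends e).1 := by rw [← h]
        have e2 : D.φ (Γ₁.ends (D.ψ e)).2 = (Γ₀.ends e).2 := by rw [← h]
        exact ⟨e1.trans h1, e2.trans h2⟩
      · have e1 : D.φ (Γ₁.ends (D.ψ e)).2 = (Γ₀.ends e).1 := by rw [← h]
        have e2 : D.φ (Γ₁.ends (D.ψ e)).1 = (Γ₀.ends e).2 := by rw [← h]
        exact ⟨e2.trans h2, e1.trans h1⟩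
    rw [← hKeq] at hmem
    exact hmem.1 ⟨e, rfl⟩

lemma deg_mbr_forward (h : IsSepRatMultibridge Γ₀ ({v} : Set Γ₀.V)) :
    IsSepRatMultibridge Γ₁ (fib D v) := by
  obtain ⟨hne, hproper, hgen, hleg, htc, hcard, hcomp⟩ := h
  have hnl : edgesIn Γ₀.ends ({v} : Set Γ₀.V) = ∅ := by
    have : (edgesIn Γ₀.ends ({v} : Set Γ₀.V)).ncard = 0 := by
      have := Set.ncard_singleton v
      omega
    exact (Set.ncard_eq_zero (Set.toFinite _)).mp this
  obtain ⟨hg1, hKeq, hKcard⟩ := genus_forward D v (hgen v rfl) hnl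
  refine ⟨fib_nonempty D v, ?_, hg1, ?_, ?_, ?_, ?_⟩
  · obtain ⟨u, hu⟩ := Set.ne_univ_iff_exists_notMem _ |>.mp hproper
    rw [Set.mem_singleton_iff] at hu
    obtain ⟨a, ha⟩ := fib_nonempty D u
    intro hc
    have : a ∈ fib D v := hc ▸ Set.mem_univ a
    exact hu (((ha : D.φ a = u).symm).trans (this : D.φ a = v))
  · intro i hi
    exact hleg i (by rw [Set.mem_singleton_iff, ← D.leg_comm i]; exact hi)
  · rw [hKeq]
    exact D.fiber_conn v
  · rw [hKeq]
    exact hKcard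
  · rw [comp_compl_eq D v, hcomp]
    exact cross_card D v

lemma deg_mbr_backward (h : IsSepRatMultibridge Γ₁ (fib D v)) :
    IsSepRatMultibridge Γ₀ ({v} : Set Γ₀.V) := by
  obtain ⟨hne, hproper, hgen, hleg, htc, hcard, hcomp⟩ := h
  obtain ⟨hg0, hnl⟩ := genus_backward D v hgen hcard
  refine ⟨⟨v, rfl⟩, ?_, ?_, ?_, numComponents_singleton _, by rw [hnl]; simp, ?_⟩
  · obtain ⟨b, hb⟩ := Set.ne_univ_iff_exists_notMem _ |>.mp hproper
    intro hc
    exact hb (by rw [mem_fib]; exact Set.mem_singleton_iff.mp (hc ▸ Set.mem_univ (D.φ b)))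
  · intro w hw
    rw [Set.mem_singleton_iff] at hw
    rw [hw]
    exact hg0
  · intro i hi
    rw [Set.mem_singleton_iff] at hi
    exact hleg i (by rw [mem_fib, D.leg_comm i]; exact hi)
  · rw [← comp_compl_eq D v, hcomp, cross_card D v]

end DEG2
section ISO
variable {n : ℕ} {Γ Γ' : StableGraph n} (σ : GraphIso Γ Γ')

lemma iso_reach {S : Set Γ.E} {a b : Γ.V} (h : reach Γ.ends S a b) :
    reach Γ'.ends (σ.eEquiv '' S) (σ.vEquiv a) (σ.vEquiv b) := by
  induction h with
  | refl => exact reach_refl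
  | @tail p q hap hstep ih =>
    refine reach_trans ih (reach_step ?_)
    obtain ⟨e, heS, hends⟩ := hstep
    refine ⟨σ.eEquiv e, Set.mem_image_of_mem _ heS, ?_⟩
    rcases σ.ends_comm e with h | h <;> rcases hends with h' | h' <;> rw [h'] at h
    · exact Or.inl h
    · exact Or.inr h
    · exact Or.inr h
    · exact Or.inl h

/-- The inverse of a graph isomorphism. -/
def GraphIso.symm (σ : GraphIso Γ Γ') : GraphIso Γ' Γ where
  vEquiv := σ.vEquiv.symm
  eEquiv := σ.eEquiv.symm
  ends_comm := fun e => by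
    rcases σ.ends_comm (σ.eEquiv.symm e) with h | h <;>
      rw [Equiv.apply_symm_apply] at h
    · left
      rw [h]
      simp
    · right
      rw [h]
      simp
  genus_comm := fun w => by
    have := σ.genus_comm (σ.vEquiv.symm w)
    rw [Equiv.apply_symm_apply] at this
    exact this.symm
  leg_comm := fun i => by
    rw [← σ.leg_comm i, Equiv.symm_apply_apply]

lemma iso_image_edgesIn (W : Set Γ.V) :
    σ.eEquiv '' edgesIn Γ.ends W = edgesIn Γ'.ends (σ.vEquiv '' W) := by
  ext f
  obtain ⟨e, rfl⟩ := σ.eEquiv.surjective f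
  constructor
  · rintro ⟨e', he', heq⟩
    obtain rfl := σ.eEquiv.injective heq
    rcases σ.ends_comm e' with h | h <;> rw [edgesIn, Set.mem_setOf_eq, h]
    · exact ⟨Set.mem_image_of_mem _ he'.1, Set.mem_image_of_mem _ he'.2⟩
    · exact ⟨Set.mem_image_of_mem _ he'.2, Set.mem_image_of_mem _ he'.1⟩
  · intro hf
    refine ⟨e, ?_, rfl⟩
    rcases σ.ends_comm e with h | h <;> rw [edgesIn, Set.mem_setOf_eq, h] at hf
    · exact ⟨(σ.vEquiv.injective.mem_set_image).mp hf.1,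
        (σ.vEquiv.injective.mem_set_image).mp hf.2⟩
    · exact ⟨(σ.vEquiv.injective.mem_set_image).mp hf.2,
        (σ.vEquiv.injective.mem_set_image).mp hf.1⟩

lemma iso_image_compl (W : Set Γ.V) : (σ.vEquiv '' W)ᶜ = σ.vEquiv '' Wᶜ := by
  rw [Set.image_compl_eq σ.vEquiv.bijective]

lemma iso_image_cross (W : Set Γ.V) :
    σ.eEquiv '' crossEdges Γ.ends W Wᶜ =
      crossEdges Γ'.ends (σ.vEquiv '' W) (σ.vEquiv '' W)ᶜ := by
  rw [iso_image_compl]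
  ext f
  obtain ⟨e, rfl⟩ := σ.eEquiv.surjective f
  constructor
  · rintro ⟨e', he', heq⟩
    obtain rfl := σ.eEquiv.injective heq
    rcases σ.ends_comm e' with h | h <;> rw [crossEdges, Set.mem_setOf_eq, h] <;>
      rcases he' with ⟨h1, h2⟩ | ⟨h1, h2⟩
    · exact Or.inl ⟨Set.mem_image_of_mem _ h1, Set.mem_image_of_mem _ h2⟩
    · exact Or.inr ⟨Set.mem_image_of_mem _ h1, Set.mem_image_of_mem _ h2⟩
    · exact Or.inr ⟨Set.mem_image_of_mem _ h2, Set.mem_image_of_mem _ h1⟩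
    · exact Or.inl ⟨Set.mem_image_of_mem _ h2, Set.mem_image_of_mem _ h1⟩
  · intro hf
    refine ⟨e, ?_, rfl⟩
    rcases σ.ends_comm e with h | h <;> rw [crossEdges, Set.mem_setOf_eq, h] at hf <;>
      rcases hf with ⟨h1, h2⟩ | ⟨h1, h2⟩
    · exact Or.inl ⟨σ.vEquiv.injective.mem_set_image.mp h1,
        σ.vEquiv.injective.mem_set_image.mp h2⟩
    · exact Or.inr ⟨σ.vEquiv.injective.mem_set_image.mp h1,
        σ.vEquiv.injective.mem_set_image.mp h2⟩
    · exact Or.inr ⟨σ.vEquiv.injective.mem_set_image.mp h2,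
        σ.vEquiv.injective.mem_set_image.mp h1⟩
    · exact Or.inl ⟨σ.vEquiv.injective.mem_set_image.mp h2,
        σ.vEquiv.injective.mem_set_image.mp h1⟩

lemma iso_reach_back {S : Set Γ.E} {a b : Γ.V}
    (h : reach Γ'.ends (σ.eEquiv '' S) (σ.vEquiv a) (σ.vEquiv b)) :
    reach Γ.ends S a b := by
  have := iso_reach σ.symm h
  simp only [GraphIso.symm] at this
  rw [Equiv.symm_image_image, Equiv.symm_apply_apply, Equiv.symm_apply_apply] at this
  exact this

lemma iso_numComponents (W : Set Γ.V) (S : Set Γ.E) :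
    numComponents Γ'.ends (σ.vEquiv '' W) (σ.eEquiv '' S) =
      numComponents Γ.ends W S := by
  let r := fun p q : W => reach Γ.ends S (p : Γ.V) (q : Γ.V)
  let r' := fun p q : (σ.vEquiv '' W : Set Γ'.V) =>
    reach Γ'.ends (σ.eEquiv '' S) (p : Γ'.V) (q : Γ'.V)
  let F : Quot r → Quot r' :=
    Quot.lift (fun a => Quot.mk r' ⟨σ.vEquiv (a : Γ.V), Set.mem_image_of_mem _ a.2⟩)
      (fun a b h => quot_mk_eq_iff.mpr (iso_reach σ h))
  have hsurj : Function.Surjective F := by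
    intro q
    obtain ⟨⟨w', hw'⟩, rfl⟩ := Quot.exists_rep q
    obtain ⟨w, hw, rfl⟩ := hw'
    exact ⟨Quot.mk r ⟨w, hw⟩, rfl⟩
  have hinj : Function.Injective F := by
    intro p q h
    obtain ⟨⟨a, ha⟩, rfl⟩ := Quot.exists_rep p
    obtain ⟨⟨b, hb⟩, rfl⟩ := Quot.exists_rep q
    exact quot_mk_eq_iff.mpr (iso_reach_back σ (quot_mk_eq_iff.mp h))
  exact (Nat.card_eq_of_bijective F ⟨hinj, hsurj⟩).symm

lemma iso_sep {W : Set Γ.V} (h : IsSepRatMultibridge Γ W) :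
    IsSepRatMultibridge Γ' (σ.vEquiv '' W) := by
  obtain ⟨hne, hproper, hgen, hleg, htc, hcard, hcomp⟩ := h
  refine ⟨hne.image _, ?_, ?_, ?_, ?_, ?_, ?_⟩
  · intro hc
    apply hproper
    apply Set.eq_univ_of_forall
    intro x
    have : σ.vEquiv x ∈ σ.vEquiv '' W := hc ▸ Set.mem_univ _
    exact σ.vEquiv.injective.mem_set_image.mp this
  · rintro w' ⟨w, hw, rfl⟩
    rw [σ.genus_comm w]
    exact hgen w hw
  · rintro i ⟨w, hw, heq⟩
    rw [← σ.leg_comm i] at heq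
    obtain rfl := σ.vEquiv.injective heq
    exact hleg i hw
  · rw [← iso_image_edgesIn, iso_numComponents]
    exact htc
  · rw [← iso_image_edgesIn, Set.ncard_image_of_injective _ σ.eEquiv.injective,
      Set.ncard_image_of_injective _ σ.vEquiv.injective]
    exact hcard
  · rw [← iso_image_cross, iso_image_compl, ← iso_image_edgesIn, iso_numComponents,
      Set.ncard_image_of_injective _ σ.eEquiv.injective]
    exact hcomp

end ISO
/-- Part (a): the separating rational multibridge assignment is proper. -/
lemma sep_ne_univ {g : ℤ} {n : ℕ} (hgn : 2 < 2 * g + n) (Γ : StableGraph n)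
    (hΓ : totalGenus Γ = g) : sepAssignment n Γ ≠ Set.univ := by
  intro huniv
  by_cases hn : n = 0
  · subst hn
    rw [Nat.cast_zero, add_zero] at hgn
    have hVne : Nonempty Γ.V := by
      by_contra hV
      rw [not_nonempty_iff] at hV
      haveI : IsEmpty Γ.E := ⟨fun e => hV.false (Γ.ends e).1⟩
      rw [totalGenus] at hΓ
      rw [Nat.card_of_isEmpty, Nat.card_of_isEmpty] at hΓ
      rw [Finset.univ_eq_empty, Finset.sum_empty] at hΓ
      omega
    have hall : ∀ w : Γ.V, MBr Γ.ends {w} ∧ Γ.genus w = 0 := by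
      intro w
      have hw : w ∈ sepAssignment 0 Γ := by rw [huniv]; exact Set.mem_univ w
      obtain ⟨W, ⟨h1, h2, h3, h4, h5, h6, h7⟩, hwW⟩ := hw
      exact ⟨MBr_singleton Γ.conn ⟨h1, h2, h5, h6, h7⟩ hwW, h3 w hwW⟩
    have hcb := card_bound_of_all_singletons Γ.conn hVne (fun w => (hall w).1)
    have hsum : ∑ v : Γ.V, (Γ.genus v : ℤ) = 0 :=
      Finset.sum_eq_zero fun w _ => by rw [(hall w).2]; rfl
    rw [totalGenus, hsum] at hΓ
    omega
  · have hmem : Γ.leg ⟨0, Nat.pos_of_ne_zero hn⟩ ∈ sepAssignment n Γ := by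
      rw [huniv]; exact Set.mem_univ _
    obtain ⟨W, hWmb, hW⟩ := hmem
    exact hWmb.2.2.2.1 _ hW


end Stmt12

open Stmt12 in
theorem stmt_12 (g : ℤ) (n : ℕ) (hgn : 2 < 2 * g + n) :
    -- the degeneration of a single separating rational `m`-bridge vertex is a
    -- separating rational `m`-bridge, and conversely
    (∀ (Γ₀ Γ₁ : StableGraph n), totalGenus Γ₀ = g → totalGenus Γ₁ = g →
      ∀ (D : Degeneration Γ₀ Γ₁) (v : Γ₀.V),
        (IsSepRatMultibridge Γ₀ {v} ↔ IsSepRatMultibridge Γ₁ (D.φ ⁻¹' {v})) ∧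
        (IsSepRatMultibridge Γ₀ {v} →
          (crossEdges Γ₀.ends {v} ({v}ᶜ)).ncard =
            (crossEdges Γ₁.ends (D.φ ⁻¹' {v}) ((D.φ ⁻¹' {v})ᶜ)).ncard)) ∧
    -- hence the separating rational multibridge assignment is extremal
    IsExtremalAssignment g n (sepAssignment n) := by
  constructor
  · intro Γ₀ Γ₁ h0 h1 D v
    exact ⟨⟨fun h => deg_mbr_forward D v h, fun h => deg_mbr_backward D v h⟩,
      fun _ => cross_card D v⟩
  · refine ⟨fun Γ hΓ => sep_ne_univ hgn Γ hΓ, ?_, ?_⟩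
    · intro Γ hΓ σ v
      constructor
      · rintro ⟨W, hW, hvW⟩
        exact ⟨σ.vEquiv '' W, iso_sep σ hW, Set.mem_image_of_mem _ hvW⟩
      · rintro ⟨W, hW, hvW⟩
        refine ⟨σ.symm.vEquiv '' W, iso_sep σ.symm hW, ?_⟩
        exact ⟨σ.vEquiv v, hvW, Equiv.symm_apply_apply _ _⟩
    · intro Γ₀ Γ₁ h0 h1 D v
      constructor
      · rintro ⟨W, hWmb, hvW⟩
        have hsingle : IsSepRatMultibridge Γ₀ {v} := by
          obtain ⟨a1, a2, a3, a4, a5, a6, a7⟩ := hWmb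
          obtain ⟨b1, b2, b3, b4, b5⟩ := MBr_singleton Γ₀.conn ⟨a1, a2, a5, a6, a7⟩ hvW
          refine ⟨b1, b2, ?_, ?_, b3, b4, b5⟩
          · intro w hw
            rw [Set.mem_singleton_iff] at hw
            rw [hw]
            exact a3 v hvW
          · intro i hi
            rw [Set.mem_singleton_iff] at hi
            exact a4 i (hi ▸ hvW)
        have hfib := deg_mbr_forward D v hsingle
        intro w hw
        exact ⟨fib D v, hfib, hw⟩
      · intro hsub
        have hZ1 := sep_ne_univ hgn Γ₁ h1
        have hproper : fib D v ≠ Set.univ := by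
          intro hc
          exact hZ1 (Set.eq_univ_of_univ_subset (hc ▸ hsub))
        have hconn1 : numComponents Γ₁.ends (fib D v) (edgesIn Γ₁.ends (fib D v)) = 1 := by
          have hle := numComponents_le_of_subset (ends := Γ₁.ends) (W := fib D v)
            (conEdges_subset D v)
          have h2 : numComponents Γ₁.ends (fib D v) (conEdges D v) = 1 := D.fiber_conn v
          have hpos := numComponents_pos (ends := Γ₁.ends) (fib_nonempty D v)
            (edgesIn Γ₁.ends (fib D v))
          omega
        have hsing : ∀ w ∈ fib D v, MBr Γ₁.ends {w} := by
          intro w hw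
          obtain ⟨W, ⟨a1, a2, a3, a4, a5, a6, a7⟩, hwW⟩ := hsub hw
          exact MBr_singleton Γ₁.conn ⟨a1, a2, a5, a6, a7⟩ hwW
        obtain ⟨c1, c2, c3, c4, c5⟩ :=
          MBr_assembly Γ₁.conn (fib_nonempty D v) hproper hconn1 hsing
        have hgen : ∀ w ∈ fib D v, Γ₁.genus w = 0 := by
          intro w hw
          obtain ⟨W, hWmb, hwW⟩ := hsub hw
          exact hWmb.2.2.1 w hwW
        have hleg : ∀ i, Γ₁.leg i ∉ fib D v := by
          intro i hi
          obtain ⟨W, hWmb, hwW⟩ := hsub hi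
          exact hWmb.2.2.2.1 i hwW
        exact ⟨{v}, deg_mbr_backward D v ⟨c1, c2, hgen, hleg, c3, c4, c5⟩, rfl⟩
end

section
/- Let Γ be a connected graph, Z a connected genus-0 subgraph, and H a connected component of the complement of Z meeting Z along m₀ ≥ 4 edges. Suppose Z' is a connected genus-0 subgraph of Γ containing Z but not containing H. If H₁,...,H_l are the connected components of H \ Z' and e_i is the number of edges connecting H_i to (Z ∪ H) \ H_i, then Σ_{i=1}^l (e_i − 1) ≥ m₀ − 1 ≥ 3; consequently either some e_i ≥ 4 or there exist two distinct indices i ≠ j with e_i ≥ 2 and e_j ≥ 2. -/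
/-!
STATEMENT 13: Let `Γ` be a connected multigraph, `Z` a connected genus-0 subgraph, and
`H` a connected component of the complement of `Z` meeting `Z` along `m₀ ≥ 4` edges.
Suppose `Z'` is a connected genus-0 subgraph of `Γ` containing `Z` but not containing
`H`.  If `H₁,…,H_l` are the connected components of `H \ Z'` and `e_i` is the number of
edges connecting `H_i` to `(Z ∪ H) \ H_i`, then `Σ (e_i − 1) ≥ m₀ − 1 ≥ 3`;
consequently either some `e_i ≥ 4` or there are two distinct indices `i ≠ j` with
`e_i ≥ 2` and `e_j ≥ 2`.
-/

namespace Stmt13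

variable {V E : Type*} [Fintype V] [Fintype E]

def edgesIn (ends : E → V × V) (S : Set V) : Set E :=
  {e | (ends e).1 ∈ S ∧ (ends e).2 ∈ S}

noncomputable def genus (ends : E → V × V) (S : Set V) : ℤ :=
  ((edgesIn ends S).ncard : ℤ) - (S.ncard : ℤ) + 1

def adjWithin (ends : E → V × V) (S : Set V) (a b : V) : Prop :=
  a ∈ S ∧ b ∈ S ∧ ∃ e : E, ends e = (a, b) ∨ ends e = (b, a)

def ConnectedOn (ends : E → V × V) (S : Set V) : Prop :=
  S.Nonempty ∧ ∀ a ∈ S, ∀ b ∈ S, Relation.ReflTransGen (adjWithin ends S) a b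

def crossEdges (ends : E → V × V) (S T : Set V) : Set E :=
  {e | ((ends e).1 ∈ S ∧ (ends e).2 ∈ T) ∨ ((ends e).1 ∈ T ∧ (ends e).2 ∈ S)}

end Stmt13


set_option linter.unusedSectionVars false
namespace Aux13
open Stmt13

variable {V E : Type*} [Fintype V] [Fintype E] (ends : E → V × V)

lemma ncard_iUnion {X ι : Type*} [Fintype X] [Fintype ι] (A : ι → Set X)
    (h : ∀ i j, i ≠ j → Disjoint (A i) (A j)) :
    (⋃ i, A i).ncard = ∑ i, (A i).ncard := by
  classical
  have : ∀ s : Finset ι, (⋃ i ∈ s, A i).ncard = ∑ i ∈ s, (A i).ncard := by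
    intro s
    induction s using Finset.induction with
    | empty => simp
    | @insert a s hnotmem ih =>
      rw [Finset.set_biUnion_insert, Set.ncard_union_eq, ih, Finset.sum_insert hnotmem]
      · exact Set.disjoint_iUnion₂_right.2 fun i hi => h a i (fun hai => hnotmem (hai ▸ hi))
  simpa using this Finset.univ

variable {ends}

lemma crossEdges_comm (S T : Set V) : crossEdges ends S T = crossEdges ends T S := by
  ext e; constructor <;> (rintro (h | h); exacts [Or.inr h, Or.inl h])

lemma crossEdges_mono_right {T T' : Set V} (S : Set V) (h : T ⊆ T') :
    crossEdges ends S T ⊆ crossEdges ends S T' := by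
  rintro e (⟨h1, h2⟩ | ⟨h1, h2⟩)
  exacts [Or.inl ⟨h1, h h2⟩, Or.inr ⟨h h1, h2⟩]

lemma crossEdges_union_right (S T₁ T₂ : Set V) :
    crossEdges ends S (T₁ ∪ T₂) = crossEdges ends S T₁ ∪ crossEdges ends S T₂ := by
  ext e
  constructor
  · rintro (⟨h1, h2 | h2⟩ | ⟨h1 | h1, h2⟩)
    exacts [Or.inl (Or.inl ⟨h1, h2⟩), Or.inr (Or.inl ⟨h1, h2⟩),
      Or.inl (Or.inr ⟨h1, h2⟩), Or.inr (Or.inr ⟨h1, h2⟩)]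
  · rintro (h | h) <;>
      exact crossEdges_mono_right S (by simp) h

lemma crossEdges_iUnion_right {ι : Type*} (S : Set V) (A : ι → Set V) :
    crossEdges ends S (⋃ i, A i) = ⋃ i, crossEdges ends S (A i) := by
  ext e
  constructor
  · rintro (⟨h1, h2⟩ | ⟨h1, h2⟩)
    · obtain ⟨i, hi⟩ := Set.mem_iUnion.1 h2
      exact Set.mem_iUnion.2 ⟨i, Or.inl ⟨h1, hi⟩⟩
    · obtain ⟨i, hi⟩ := Set.mem_iUnion.1 h1
      exact Set.mem_iUnion.2 ⟨i, Or.inr ⟨hi, h2⟩⟩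
  · intro h
    obtain ⟨i, hi⟩ := Set.mem_iUnion.1 h
    exact crossEdges_mono_right S (Set.subset_iUnion A i) hi

lemma crossEdges_disjoint {S T₁ T₂ : Set V} (h12 : Disjoint T₁ T₂)
    (h1 : Disjoint S T₁) (h2 : Disjoint S T₂) :
    Disjoint (crossEdges ends S T₁) (crossEdges ends S T₂) := by
  rw [Set.disjoint_left]
  rintro e (⟨a1, a2⟩ | ⟨a1, a2⟩) (⟨b1, b2⟩ | ⟨b1, b2⟩)
  · exact (h12.le_bot ⟨a2, b2⟩ : False).elim
  · exact (h2.le_bot ⟨a1, b1⟩ : False).elim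
  · exact (h1.le_bot ⟨b1, a1⟩ : False).elim
  · exact (h12.le_bot ⟨a1, b1⟩ : False).elim

lemma crossEdges_empty_right (S : Set V) : crossEdges ends S (∅ : Set V) = ∅ := by
  ext e
  simp only [crossEdges, Set.mem_setOf_eq, Set.mem_empty_iff_false, iff_false]
  rintro (⟨-, h⟩ | ⟨h, -⟩) <;> exact h

lemma edgesIn_union (S T : Set V) :
    edgesIn ends (S ∪ T) = edgesIn ends S ∪ edgesIn ends T ∪ crossEdges ends S T := by
  ext e
  constructor
  · rintro ⟨h1 | h1, h2 | h2⟩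
    exacts [Or.inl (Or.inl ⟨h1, h2⟩), Or.inr (Or.inl ⟨h1, h2⟩),
      Or.inr (Or.inr ⟨h1, h2⟩), Or.inl (Or.inr ⟨h1, h2⟩)]
  · rintro ((⟨h1, h2⟩ | ⟨h1, h2⟩) | (⟨h1, h2⟩ | ⟨h1, h2⟩))
    exacts [⟨Or.inl h1, Or.inl h2⟩, ⟨Or.inr h1, Or.inr h2⟩,
      ⟨Or.inl h1, Or.inr h2⟩, ⟨Or.inr h1, Or.inl h2⟩]

lemma edgesIn_mono {S T : Set V} (h : S ⊆ T) : edgesIn ends S ⊆ edgesIn ends T :=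
  fun _ ⟨h1, h2⟩ => ⟨h h1, h h2⟩

lemma edgesIn_disjoint_of_disjoint {S T : Set V} (h : Disjoint S T) :
    Disjoint (edgesIn ends S) (edgesIn ends T) := by
  rw [Set.disjoint_left]
  rintro e ⟨a1, -⟩ ⟨b1, -⟩
  exact h.le_bot ⟨a1, b1⟩

lemma edgesIn_disjoint_cross_left {S T : Set V} (h : Disjoint S T) :
    Disjoint (edgesIn ends S) (crossEdges ends S T) := by
  rw [Set.disjoint_left]
  rintro e ⟨a1, a2⟩ (⟨-, b2⟩ | ⟨b1, -⟩)
  exacts [h.le_bot ⟨a2, b2⟩, h.le_bot ⟨a1, b1⟩]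

lemma edgesIn_disjoint_cross_right {S T : Set V} (h : Disjoint S T) :
    Disjoint (edgesIn ends T) (crossEdges ends S T) := by
  rw [Set.disjoint_left]
  rintro e ⟨a1, a2⟩ (⟨b1, -⟩ | ⟨-, b2⟩)
  exacts [h.le_bot ⟨b1, a1⟩, h.le_bot ⟨b2, a2⟩]

/-- Cardinality of edges in a disjoint union. -/
lemma ncard_edgesIn_union {S T : Set V} (h : Disjoint S T) :
    (edgesIn ends (S ∪ T)).ncard
      = (edgesIn ends S).ncard + (edgesIn ends T).ncard + (crossEdges ends S T).ncard := by
  rw [edgesIn_union, Set.ncard_union_eq, Set.ncard_union_eq (edgesIn_disjoint_of_disjoint h)]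
  · rw [Set.disjoint_union_left]
    exact ⟨edgesIn_disjoint_cross_left h, edgesIn_disjoint_cross_right h⟩

end Aux13

section
open Stmt13
set_option linter.unusedSectionVars false
namespace Aux13
variable {V E : Type*} [Fintype V] [Fintype E] {ends : E → V × V}
lemma edgesIn_empty : edgesIn ends (∅ : Set V) = ∅ := by
  ext e; simp [edgesIn]
end Aux13
end
section
open Stmt13
set_option linter.unusedSectionVars false
set_option maxHeartbeats 1000000
namespace Aux13

variable {V E : Type*} [Fintype V] [Fintype E] {ends : E → V × V}

lemma exists_boundary_edge {T S : Set V} (hT : ConnectedOn ends T) (hST : S ⊆ T)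
    (hS : S.Nonempty) (hTS : (T \ S).Nonempty) :
    ∃ (ε : E) (x y : V), x ∈ S ∧ y ∈ T \ S ∧ (ends ε = (x, y) ∨ ends ε = (y, x)) := by
  obtain ⟨a, ha⟩ := hS
  obtain ⟨b, hb⟩ := hTS
  have key : ∀ c, Relation.ReflTransGen (adjWithin ends T) a c → c ∉ S →
      ∃ (ε : E) (x y : V), x ∈ S ∧ y ∈ T \ S ∧ (ends ε = (x, y) ∨ ends ε = (y, x)) := by
    intro c hac
    induction hac with
    | refl => intro h; exact absurd ha h
    | @tail c d h₁ h₂ ih =>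
      intro hdS
      by_cases hc : c ∈ S
      · obtain ⟨hcT, hdT, ε, hε⟩ := h₂
        exact ⟨ε, c, d, hc, ⟨hdT, hdS⟩, hε⟩
      · exact ih hc
  exact key b (hT.2 a (hST ha) b hb.1) hb.2

lemma grow_base {ι : Type*} {T S : Set V} (I : Finset ι) (Sc : ι → Set V)
    (hempty : T \ S = ∅) (hST : S ⊆ T)
    (hne : ∀ i ∈ I, (Sc i).Nonempty)
    (hsub : ∀ i ∈ I, Sc i ⊆ T)
    (hdS : ∀ i ∈ I, Disjoint S (Sc i)) :
    ((edgesIn ends S).ncard : ℤ) - S.ncard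
        + ∑ i ∈ I, (((edgesIn ends (Sc i)).ncard : ℤ) - (Sc i).ncard + 1)
      ≤ ((edgesIn ends T).ncard : ℤ) - T.ncard := by
  have hSeqT : S = T := hST.antisymm (Set.diff_eq_empty.mp hempty)
  have hI : I = ∅ := by
    rw [Finset.eq_empty_iff_forall_notMem]
    intro i hi
    obtain ⟨v, hv⟩ := hne i hi
    exact Set.disjoint_left.1 (hdS i hi) (hSeqT ▸ hsub i hi hv) hv
  subst hSeqT
  simp [hI]

/-- The key "growing" lemma. -/
lemma grow {ι : Type*} [DecidableEq ι] {T : Set V} (hT : ConnectedOn ends T) :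
    ∀ (n : ℕ) (S : Set V) (I : Finset ι) (Sc : ι → Set V),
      (T \ S).ncard ≤ n → S ⊆ T → S.Nonempty →
      (∀ i ∈ I, Sc i ⊆ T) → (∀ i ∈ I, (Sc i).Nonempty) →
      (∀ i ∈ I, Disjoint S (Sc i)) →
      (∀ i ∈ I, ∀ j ∈ I, i ≠ j → Disjoint (Sc i) (Sc j)) →
      ((edgesIn ends S).ncard : ℤ) - S.ncard
          + ∑ i ∈ I, (((edgesIn ends (Sc i)).ncard : ℤ) - (Sc i).ncard + 1)
        ≤ ((edgesIn ends T).ncard : ℤ) - T.ncard := by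
  intro n
  induction n with
  | zero =>
    intro S I Sc hn hST hS hsub hne hdS hdd
    have hempty : T \ S = ∅ := by
      rw [← Set.ncard_eq_zero (Set.toFinite (T \ S))]
      omega
    exact grow_base I Sc hempty hST hne hsub hdS
  | succ n ih =>
    intro S I Sc hn hST hS hsub hne hdS hdd
    rcases (T \ S).eq_empty_or_nonempty with hempty | hTS
    · exact grow_base I Sc hempty hST hne hsub hdS
    obtain ⟨ε, x, y, hxS, hyTS, hends⟩ := exists_boundary_edge hT hST hS hTS
    have hεS : ε ∉ edgesIn ends S := by
      rcases hends with h | h <;> rintro ⟨h1, h2⟩ <;> rw [h] at h1 h2 <;>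
        exact hyTS.2 (by assumption)
    by_cases hy : ∃ i ∈ I, y ∈ Sc i
    · -- absorb a whole piece
      obtain ⟨i, hiI, hySc⟩ := hy
      set S' := S ∪ Sc i with hS'
      have hS'T : S' ⊆ T := Set.union_subset hST (hsub i hiI)
      have hcard : S'.ncard = S.ncard + (Sc i).ncard :=
        Set.ncard_union_eq (hdS i hiI) (Set.toFinite _) (Set.toFinite _)
      have hεSc : ε ∉ edgesIn ends (Sc i) := by
        have hx : x ∉ Sc i := Set.disjoint_left.1 (hdS i hiI) hxS
        rcases hends with h | h <;> rintro ⟨h1, h2⟩ <;> rw [h] at h1 h2 <;> exact hx (by assumption)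
      have hεS' : ε ∈ edgesIn ends S' := by
        rcases hends with h | h <;>
          exact ⟨by rw [h]; first
            | exact Or.inl hxS
            | exact Or.inr hySc, by rw [h]; first
            | exact Or.inr hySc
            | exact Or.inl hxS⟩
      have hedges : (edgesIn ends S).ncard + (edgesIn ends (Sc i)).ncard + 1
          ≤ (edgesIn ends S').ncard := by
        have hsub2 : insert ε (edgesIn ends S ∪ edgesIn ends (Sc i)) ⊆ edgesIn ends S' := by
          rw [Set.insert_subset_iff]
          exact ⟨hεS', Set.union_subset (edgesIn_mono Set.subset_union_left)
            (edgesIn_mono Set.subset_union_right)⟩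
        have h1 : (insert ε (edgesIn ends S ∪ edgesIn ends (Sc i))).ncard
            = (edgesIn ends S).ncard + (edgesIn ends (Sc i)).ncard + 1 := by
          rw [Set.ncard_insert_of_notMem (by simp [hεS, hεSc]) (Set.toFinite _),
            Set.ncard_union_eq (edgesIn_disjoint_of_disjoint (hdS i hiI))
              (Set.toFinite _) (Set.toFinite _)]
        rw [← h1]
        exact Set.ncard_le_ncard hsub2 (Set.toFinite _)
      have hdec : (T \ S').ncard ≤ n := by
        have hss : T \ S' ⊂ T \ S := by
          constructor
          · exact Set.diff_subset_diff_right Set.subset_union_left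
          · intro hsub3
            exact (hsub3 hyTS).2 (Or.inr hySc)
        have := Set.ncard_lt_ncard hss (Set.toFinite _)
        omega
      have hIH := ih S' (I.erase i) Sc hdec hS'T (hS.mono Set.subset_union_left)
        (fun j hj => hsub j (Finset.mem_of_mem_erase hj))
        (fun j hj => hne j (Finset.mem_of_mem_erase hj))
        (fun j hj => by
          rw [hS', Set.disjoint_union_left]
          exact ⟨hdS j (Finset.mem_of_mem_erase hj),
            hdd i hiI j (Finset.mem_of_mem_erase hj) (Finset.ne_of_mem_erase hj).symm⟩)
        (fun j hj k hk hjk =>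
          hdd j (Finset.mem_of_mem_erase hj) k (Finset.mem_of_mem_erase hk) hjk)
      have hsum : ∑ j ∈ I.erase i, (((edgesIn ends (Sc j)).ncard : ℤ) - (Sc j).ncard + 1)
            + (((edgesIn ends (Sc i)).ncard : ℤ) - (Sc i).ncard + 1)
          = ∑ j ∈ I, (((edgesIn ends (Sc j)).ncard : ℤ) - (Sc j).ncard + 1) :=
        Finset.sum_erase_add I _ hiI
      have hc' : (S'.ncard : ℤ) = (S.ncard : ℤ) + (Sc i).ncard := by exact_mod_cast hcard
      have he' : ((edgesIn ends S).ncard : ℤ) + (edgesIn ends (Sc i)).ncard + 1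
          ≤ ((edgesIn ends S').ncard : ℤ) := by exact_mod_cast hedges
      linarith [hIH, hsum, hc', he']
    · -- absorb a single vertex
      push_neg at hy
      set S' := insert y S with hS'
      have hyS : y ∉ S := hyTS.2
      have hS'T : S' ⊆ T := Set.insert_subset hyTS.1 hST
      have hcard : S'.ncard = S.ncard + 1 := Set.ncard_insert_of_notMem hyS (Set.toFinite _)
      have hεS' : ε ∈ edgesIn ends S' := by
        rcases hends with h | h <;>
          exact ⟨by rw [h]; first
            | exact Set.mem_insert_of_mem _ hxS
            | exact Set.mem_insert _ _, by rw [h]; first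
            | exact Set.mem_insert _ _
            | exact Set.mem_insert_of_mem _ hxS⟩
      have hedges : (edgesIn ends S).ncard + 1 ≤ (edgesIn ends S').ncard := by
        have h1 : (insert ε (edgesIn ends S)).ncard = (edgesIn ends S).ncard + 1 :=
          Set.ncard_insert_of_notMem hεS (Set.toFinite _)
        rw [← h1]
        exact Set.ncard_le_ncard (Set.insert_subset hεS'
          (edgesIn_mono (Set.subset_insert _ _))) (Set.toFinite _)
      have hdec : (T \ S').ncard ≤ n := by
        have hss : T \ S' ⊂ T \ S := by
          constructor
          · exact Set.diff_subset_diff_right (Set.subset_insert _ _)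
          · intro hsub3
            exact (hsub3 hyTS).2 (Set.mem_insert _ _)
        have := Set.ncard_lt_ncard hss (Set.toFinite _)
        omega
      have hIH := ih S' I Sc hdec hS'T ⟨y, Set.mem_insert _ _⟩ hsub hne
        (fun j hj => Set.disjoint_left.2 (by
          intro v hv hvt
          rcases Set.mem_insert_iff.1 hv with rfl | hv'
          exacts [hy j hj hvt, Set.disjoint_left.1 (hdS j hj) hv' hvt]))
        hdd
      have hc' : (S'.ncard : ℤ) = (S.ncard : ℤ) + 1 := by exact_mod_cast hcard
      have he' : ((edgesIn ends S).ncard : ℤ) + 1 ≤ ((edgesIn ends S').ncard : ℤ) := by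
        exact_mod_cast hedges
      linarith [hIH, hc']

end Aux13
end
section
open Stmt13
set_option linter.unusedSectionVars false
set_option maxHeartbeats 1000000
namespace Aux13

variable {V E : Type*} [Fintype V] [Fintype E] {ends : E → V × V}

/-- A connected nonempty subgraph has at least `V - 1` edges. -/
lemma conn_ge {T : Set V} (hT : ConnectedOn ends T) :
    (T.ncard : ℤ) - 1 ≤ ((edgesIn ends T).ncard : ℤ) := by
  obtain ⟨v, hv⟩ := hT.1
  have := grow (ι := ℕ) hT (T \ {v}).ncard {v} ∅ (fun _ => ∅) le_rfl
    (Set.singleton_subset_iff.2 hv) ⟨v, rfl⟩ (by simp) (by simp) (by simp) (by simp)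
  simp only [Finset.sum_empty, add_zero, Set.ncard_singleton] at this
  have h0 : (0 : ℤ) ≤ ((edgesIn ends ({v} : Set V)).ncard : ℤ) := Int.ofNat_nonneg _
  push_cast at this
  linarith

/-- Monotonicity of `E - V` for nonempty subsets of a connected graph. -/
lemma subgraph_le {T S : Set V} (hT : ConnectedOn ends T) (hST : S ⊆ T) (hS : S.Nonempty) :
    ((edgesIn ends S).ncard : ℤ) - S.ncard ≤ ((edgesIn ends T).ncard : ℤ) - T.ncard := by
  have := grow (ι := ℕ) hT (T \ S).ncard S ∅ (fun _ => ∅) le_rfl hST hS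
    (by simp) (by simp) (by simp) (by simp)
  simpa using this

section Components

variable (ends)

/-- The setoid of connectivity on a subset `P`. -/
def pSetoid (P : Set V) : Setoid ↥P where
  r a b := Relation.ReflTransGen (adjWithin ends P) a.1 b.1
  iseqv := by
    constructor
    · intro a; exact .refl
    · intro a b h
      have key : ∀ x y, Relation.ReflTransGen (adjWithin ends P) x y →
          Relation.ReflTransGen (adjWithin ends P) y x := by
        intro x y hxy
        induction hxy with
        | refl => exact .refl
        | tail _ hbc ih =>
          obtain ⟨h1, h2, e, he⟩ := hbc
          exact Relation.ReflTransGen.head ⟨h2, h1, e, he.symm⟩ ih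
      exact key _ _ h
    · intro a b c h1 h2; exact h1.trans h2

/-- The connected component of `P` indexed by `q`. -/
def Pc (P : Set V) (q : Quotient (pSetoid ends P)) : Set V :=
  {v | ∃ h : v ∈ P, Quotient.mk (pSetoid ends P) ⟨v, h⟩ = q}

variable {ends}
variable {P : Set V}

lemma Pc_subset (q) : Pc ends P q ⊆ P := fun _ ⟨h, _⟩ => h

lemma Pc_disjoint {q q'} (h : q ≠ q') : Disjoint (Pc ends P q) (Pc ends P q') := by
  rw [Set.disjoint_left]
  rintro v ⟨hv, rfl⟩ ⟨hv', h2⟩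
  exact h h2

lemma Pc_iUnion : (⋃ q, Pc ends P q) = P := by
  ext v
  constructor
  · rintro hv
    obtain ⟨q, hq⟩ := Set.mem_iUnion.1 hv
    exact Pc_subset q hq
  · intro hv
    exact Set.mem_iUnion.2 ⟨Quotient.mk _ ⟨v, hv⟩, hv, rfl⟩

lemma Pc_nonempty (q) : (Pc ends P q).Nonempty := by
  refine ⟨(Quotient.out q).1, (Quotient.out q).2, ?_⟩
  simp [Quotient.out_eq]

lemma Pc_mem_of_adj {q v w} (hv : v ∈ Pc ends P q) (h : adjWithin ends P v w) :
    w ∈ Pc ends P q := by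
  obtain ⟨hvP, rfl⟩ := hv
  refine ⟨h.2.1, ?_⟩
  have hr : (pSetoid ends P).r ⟨v, hvP⟩ ⟨w, h.2.1⟩ := Relation.ReflTransGen.single h
  exact (Quotient.sound hr).symm

lemma Pc_mem_of_reach {q v w} (hv : v ∈ Pc ends P q)
    (h : Relation.ReflTransGen (adjWithin ends P) v w) : w ∈ Pc ends P q := by
  induction h with
  | refl => exact hv
  | tail h1 h2 ih => exact Pc_mem_of_adj ih h2

/-- Each component is connected. -/
lemma Pc_connected (q) : ConnectedOn ends (Pc ends P q) := by
  refine ⟨Pc_nonempty q, ?_⟩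
  intro a ha b hb
  obtain ⟨haP, ha2⟩ := ha
  obtain ⟨hbP, hb2⟩ := hb
  have hreach : Relation.ReflTransGen (adjWithin ends P) a b :=
    Quotient.exact (ha2.trans hb2.symm)
  have key : ∀ c, Relation.ReflTransGen (adjWithin ends P) a c →
      c ∈ Pc ends P q ∧ Relation.ReflTransGen (adjWithin ends (Pc ends P q)) a c := by
    intro c hac
    induction hac with
    | refl => exact ⟨⟨haP, ha2⟩, .refl⟩
    | @tail c d h1 h2 ih =>
      refine ⟨Pc_mem_of_adj ih.1 h2, ih.2.tail ?_⟩
      exact ⟨ih.1, Pc_mem_of_adj ih.1 h2, h2.2.2⟩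
  exact (key b hreach).2

/-- Edges within `P` lie within a single component. -/
lemma edgesIn_P_eq : edgesIn ends P = ⋃ q, edgesIn ends (Pc ends P q) := by
  ext ε
  constructor
  · rintro ⟨h1, h2⟩
    have hadj : adjWithin ends P (ends ε).1 (ends ε).2 := ⟨h1, h2, ε, Or.inl rfl⟩
    refine Set.mem_iUnion.2 ⟨Quotient.mk _ ⟨(ends ε).1, h1⟩, ⟨h1, rfl⟩, ?_⟩
    exact Pc_mem_of_adj ⟨h1, rfl⟩ hadj
  · intro h
    obtain ⟨q, hq⟩ := Set.mem_iUnion.1 h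
    exact edgesIn_mono (Pc_subset q) hq

end Components

end Aux13
end
section
open Stmt13
set_option linter.unusedSectionVars false
set_option maxHeartbeats 1000000
namespace Aux13

variable {V E : Type*} [Fintype V] [Fintype E]

lemma key_ineq (ends : E → V × V) (Z H Z' : Set V) (l : ℕ) (Hc : Fin l → Set V)
    (hZcon : ConnectedOn ends Z)
    (hHcon : ConnectedOn ends H) (hHZ : Disjoint Z H)
    (hZ'con : ConnectedOn ends Z') (hZ'0 : genus ends Z' = 0)
    (hZZ' : Z ⊆ Z') (hHZ' : ¬ H ⊆ Z')
    (hHccon : ∀ i, ConnectedOn ends (Hc i))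
    (hHcdisj : ∀ i j, i ≠ j → Disjoint (Hc i) (Hc j))
    (hHccover : (⋃ i, Hc i) = H \ Z') :
    ((edgesIn ends (H ∩ Z')).ncard : ℤ) - ((H ∩ Z').ncard : ℤ)
        + ((crossEdges ends Z (H ∩ Z')).ncard : ℤ)
        + ∑ i, (((edgesIn ends (Hc i)).ncard : ℤ) - ((Hc i).ncard : ℤ) + 1)
      ≤ ((edgesIn ends H).ncard : ℤ) - (H.ncard : ℤ) + 1 := by
  classical
  set P : Set V := H ∩ Z' with hPdef
  have hPH : P ⊆ H := Set.inter_subset_left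
  have hPZ' : P ⊆ Z' := Set.inter_subset_right
  have hZP : Disjoint Z P := hHZ.mono_right hPH
  have hHcsub : ∀ i, Hc i ⊆ H \ Z' := fun i => hHccover ▸ Set.subset_iUnion Hc i
  have hHcH : ∀ i, Hc i ⊆ H := fun i => (hHcsub i).trans Set.diff_subset
  have hHcP : ∀ i, Disjoint P (Hc i) := by
    intro i
    rw [Set.disjoint_left]
    intro v hv hv2
    exact (hHcsub i hv2).2 (hPZ' hv)
  have hZ'EV : ((edgesIn ends Z').ncard : ℤ) - (Z'.ncard : ℤ) + 1 = 0 := hZ'0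
  rcases P.eq_empty_or_nonempty with hPe | hPne
  · -- P empty
    obtain ⟨v, hvH, hvZ'⟩ : ∃ v, v ∈ H ∧ v ∉ Z' := by
      by_contra h
      push_neg at h
      exact hHZ' fun v hv => h v hv
    obtain ⟨i₀, hi₀⟩ : ∃ i, v ∈ Hc i := by
      have : v ∈ ⋃ i, Hc i := hHccover ▸ ⟨hvH, hvZ'⟩
      exact Set.mem_iUnion.1 this
    have hg := grow hHcon ((H \ Hc i₀).ncard) (Hc i₀) (Finset.univ.erase i₀) Hc le_rfl
      (hHcH i₀) (hHccon i₀).1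
      (fun j _ => hHcH j) (fun j _ => (hHccon j).1)
      (fun j hj => hHcdisj i₀ j (Finset.ne_of_mem_erase hj).symm)
      (fun j _ k _ hjk => hHcdisj j k hjk)
    have hsum := Finset.sum_erase_add Finset.univ
      (fun i => (((edgesIn ends (Hc i)).ncard : ℤ) - ((Hc i).ncard : ℤ) + 1))
      (Finset.mem_univ i₀)
    rw [hPe, crossEdges_empty_right, edgesIn_empty]
    simp only [Set.ncard_empty, Nat.cast_zero]
    simp only [← hsum]
    linarith [hg]
  · -- P nonempty
    haveI : Fintype ↥P := Fintype.ofFinite _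
    haveI : DecidableRel (pSetoid ends P).r := fun a b => Classical.propDecidable _
    haveI : Fintype (Quotient (pSetoid ends P)) := Quotient.fintype _
    set ι := Quotient (pSetoid ends P) with hι
    obtain ⟨v₀, hv₀⟩ := hPne
    set q₀ : ι := Quotient.mk _ ⟨v₀, hv₀⟩ with hq₀
    have hVP : P.ncard = ∑ q : ι, (Pc ends P q).ncard := by
      conv_lhs => rw [← Pc_iUnion (ends := ends) (P := P)]
      exact ncard_iUnion _ fun q q' h => Pc_disjoint h
    have hEP : (edgesIn ends P).ncard = ∑ q : ι, (edgesIn ends (Pc ends P q)).ncard := by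
      rw [edgesIn_P_eq]
      exact ncard_iUnion _ fun q q' h => edgesIn_disjoint_of_disjoint (Pc_disjoint h)
    have hPcH : ∀ q : ι, Pc ends P q ⊆ H := fun q => (Pc_subset q).trans hPH
    set Sc : ι ⊕ Fin l → Set V := Sum.elim (Pc ends P) Hc with hSc
    have hScH : ∀ x, Sc x ⊆ H := by rintro (q | i); exacts [hPcH q, hHcH i]
    have hScne : ∀ x, (Sc x).Nonempty := by
      rintro (q | i); exacts [Pc_nonempty q, (hHccon i).1]
    have hScdisj : ∀ x y : ι ⊕ Fin l, x ≠ y → Disjoint (Sc x) (Sc y) := by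
      rintro (q | i) (q' | i') hxy
      · exact Pc_disjoint (by simpa using hxy)
      · exact ((hHcP i').mono_left (Pc_subset q))
      · exact ((hHcP i).mono_left (Pc_subset q')).symm
      · exact hHcdisj i i' (by simpa using hxy)
    have hg := grow hHcon ((H \ Pc ends P q₀).ncard) (Pc ends P q₀)
      (Finset.univ.erase (Sum.inl q₀)) Sc le_rfl (hPcH q₀) (Pc_nonempty q₀)
      (fun x _ => hScH x) (fun x _ => hScne x)
      (fun x hx => hScdisj (Sum.inl q₀) x (Finset.ne_of_mem_erase hx).symm)
      (fun x _ y _ hxy => hScdisj x y hxy)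
    have hsum := Finset.sum_erase_add Finset.univ
      (fun x : ι ⊕ Fin l => (((edgesIn ends (Sc x)).ncard : ℤ) - ((Sc x).ncard : ℤ) + 1))
      (Finset.mem_univ (Sum.inl q₀))
    have hsplit : ∑ x : ι ⊕ Fin l,
          (((edgesIn ends (Sc x)).ncard : ℤ) - ((Sc x).ncard : ℤ) + 1)
        = ∑ q : ι, (((edgesIn ends (Pc ends P q)).ncard : ℤ) - ((Pc ends P q).ncard : ℤ) + 1)
          + ∑ i : Fin l, (((edgesIn ends (Hc i)).ncard : ℤ) - ((Hc i).ncard : ℤ) + 1) :=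
      Fintype.sum_sum_type _
    have hcompsum : ∑ q : ι,
          (((edgesIn ends (Pc ends P q)).ncard : ℤ) - ((Pc ends P q).ncard : ℤ) + 1)
        = ((edgesIn ends P).ncard : ℤ) - (P.ncard : ℤ) + (Fintype.card ι : ℤ) := by
      rw [hEP, hVP]
      push_cast
      rw [Finset.sum_add_distrib, Finset.sum_sub_distrib]
      simp [Finset.card_univ]
    have hstar : ((edgesIn ends P).ncard : ℤ) - (P.ncard : ℤ) + (Fintype.card ι : ℤ)
        + ∑ i : Fin l, (((edgesIn ends (Hc i)).ncard : ℤ) - ((Hc i).ncard : ℤ) + 1)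
        ≤ ((edgesIn ends H).ncard : ℤ) - (H.ncard : ℤ) + 1 := by
      rw [← hcompsum, ← hsplit, ← hsum]
      simp only [hSc, Sum.elim_inl] at hg ⊢
      linarith [hg]
    -- B ≤ c via injectivity into components
    have hBc : ((crossEdges ends Z P).ncard : ℤ) ≤ (Fintype.card ι : ℤ) := by
      set φ : E → ι := fun ε =>
        if h : (ends ε).2 ∈ P then Quotient.mk _ ⟨(ends ε).2, h⟩
        else if h : (ends ε).1 ∈ P then Quotient.mk _ ⟨(ends ε).1, h⟩
        else q₀ with hφ
      have hφspec : ∀ ε ∈ crossEdges ends Z P, ∃ zz pp, zz ∈ Z ∧ pp ∈ Pc ends P (φ ε) ∧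
          (ends ε = (zz, pp) ∨ ends ε = (pp, zz)) := by
        rintro ε (⟨h1, h2⟩ | ⟨h1, h2⟩)
        · refine ⟨(ends ε).1, (ends ε).2, h1, ⟨h2, ?_⟩, Or.inl rfl⟩
          simp only [hφ, dif_pos h2]
        · have h2P : (ends ε).2 ∉ P := fun hp => Set.disjoint_left.1 hZP h2 hp
          refine ⟨(ends ε).2, (ends ε).1, h2, ⟨h1, ?_⟩, Or.inr rfl⟩
          simp only [hφ, dif_neg h2P, dif_pos h1]
      have hinj : Set.InjOn φ (crossEdges ends Z P) := by
        intro ε₁ hε₁ ε₂ hε₂ hφeq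
        by_contra hne
        obtain ⟨z₁, p₁, hz₁, hp₁, hends₁⟩ := hφspec ε₁ hε₁
        obtain ⟨z₂, p₂, hz₂, hp₂, hends₂⟩ := hφspec ε₂ hε₂
        rw [← hφeq] at hp₂
        set q := φ ε₁ with hq
        set C := Z ∪ Pc ends P q with hC
        have hPcP : Pc ends P q ⊆ P := Pc_subset q
        have hC' : C ⊆ Z' := Set.union_subset hZZ' (hPcP.trans hPZ')
        have hCne : C.Nonempty := ⟨z₁, Or.inl hz₁⟩
        have hmem : ∀ (ε : E) zz pp, zz ∈ Z → pp ∈ Pc ends P q →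
            (ends ε = (zz, pp) ∨ ends ε = (pp, zz)) →
            ε ∈ edgesIn ends C ∧ ε ∉ edgesIn ends Z ∧ ε ∉ edgesIn ends (Pc ends P q) := by
          intro ε zz pp hz hp hcase
          have hpZ : pp ∉ Z := fun h => Set.disjoint_left.1 hZP h (hPcP hp)
          have hzPc : zz ∉ Pc ends P q := fun h => Set.disjoint_left.1 hZP hz (hPcP h)
          refine ⟨?_, ?_, ?_⟩
          · rcases hcase with h | h
            · exact ⟨by rw [h]; exact Or.inl hz, by rw [h]; exact Or.inr hp⟩
            · exact ⟨by rw [h]; exact Or.inr hp, by rw [h]; exact Or.inl hz⟩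
          · rcases hcase with h | h <;> rintro ⟨a1, a2⟩ <;> rw [h] at a1 a2 <;>
              first | exact hpZ a2 | exact hpZ a1
          · rcases hcase with h | h <;> rintro ⟨a1, a2⟩ <;> rw [h] at a1 a2 <;>
              first | exact hzPc a1 | exact hzPc a2
        obtain ⟨hm₁, hn₁Z, hn₁P⟩ := hmem ε₁ z₁ p₁ hz₁ hp₁ hends₁
        obtain ⟨hm₂, hn₂Z, hn₂P⟩ := hmem ε₂ z₂ p₂ hz₂ hp₂ hends₂
        have hsubC : insert ε₁ (insert ε₂ (edgesIn ends Z ∪ edgesIn ends (Pc ends P q)))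
            ⊆ edgesIn ends C := by
          rw [Set.insert_subset_iff, Set.insert_subset_iff]
          exact ⟨hm₁, hm₂, Set.union_subset (edgesIn_mono Set.subset_union_left)
            (edgesIn_mono Set.subset_union_right)⟩
        have hcardins : (insert ε₁ (insert ε₂
              (edgesIn ends Z ∪ edgesIn ends (Pc ends P q)))).ncard
            = (edgesIn ends Z).ncard + (edgesIn ends (Pc ends P q)).ncard + 2 := by
          rw [Set.ncard_insert_of_notMem (by simp [hne, hn₁Z, hn₁P]) (Set.toFinite _),
            Set.ncard_insert_of_notMem (by simp [hn₂Z, hn₂P]) (Set.toFinite _),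
            Set.ncard_union_eq (edgesIn_disjoint_of_disjoint (hZP.mono_right hPcP))
              (Set.toFinite _) (Set.toFinite _)]
        have hEC : (edgesIn ends Z).ncard + (edgesIn ends (Pc ends P q)).ncard + 2
            ≤ (edgesIn ends C).ncard := by
          rw [← hcardins]
          exact Set.ncard_le_ncard hsubC (Set.toFinite _)
        have hVC : C.ncard = Z.ncard + (Pc ends P q).ncard :=
          Set.ncard_union_eq (hZP.mono_right hPcP) (Set.toFinite _) (Set.toFinite _)
        have hlow1 := conn_ge hZcon
        have hlow2 := conn_ge (Pc_connected (ends := ends) (P := P) q)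
        have hupp := subgraph_le hZ'con hC' hCne
        have hEC' : ((edgesIn ends Z).ncard : ℤ) + ((edgesIn ends (Pc ends P q)).ncard : ℤ) + 2
            ≤ ((edgesIn ends C).ncard : ℤ) := by exact_mod_cast hEC
        have hVC' : (C.ncard : ℤ) = (Z.ncard : ℤ) + ((Pc ends P q).ncard : ℤ) := by
          exact_mod_cast hVC
        linarith
      have himg : (φ '' crossEdges ends Z P).ncard ≤ Fintype.card ι := by
        calc (φ '' crossEdges ends Z P).ncard
            ≤ (Set.univ : Set ι).ncard :=
              Set.ncard_le_ncard (Set.subset_univ _) (Set.toFinite _)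
          _ = Nat.card ι := Set.ncard_univ ι
          _ = Fintype.card ι := Nat.card_eq_fintype_card
      have := Set.ncard_image_of_injOn hinj
      omega
    linarith [hstar, hBc]

end Aux13
end


open Stmt13 in
theorem stmt_13 {V E : Type*} [Fintype V] [Fintype E] (ends : E → V × V)
    (Z H Z' : Set V) (l : ℕ) (Hc : Fin l → Set V) (m₀ : ℕ) (e : Fin l → ℕ)
    -- Γ connected
    (hΓ : ConnectedOn ends (Set.univ : Set V))
    -- Z connected of genus 0
    (hZcon : ConnectedOn ends Z) (hZ0 : genus ends Z = 0)
    -- H is a connected component of the complement of Z, meeting Z along m₀ ≥ 4 edges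
    (hHcon : ConnectedOn ends H) (hHZ : Disjoint Z H)
    (hcomp : ∀ ε : E, ((ends ε).1 ∈ H → (ends ε).2 ∈ H ∪ Z) ∧
      ((ends ε).2 ∈ H → (ends ε).1 ∈ H ∪ Z))
    (hm₀ : (crossEdges ends Z H).ncard = m₀) (hm₀4 : 4 ≤ m₀)
    -- Z' is a connected genus-0 subgraph containing Z but not H
    (hZ'con : ConnectedOn ends Z') (hZ'0 : genus ends Z' = 0)
    (hZZ' : Z ⊆ Z') (hHZ' : ¬ H ⊆ Z')
    -- the Hc i are the connected components of H \ Z'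
    (hHccon : ∀ i, ConnectedOn ends (Hc i))
    (hHcdisj : ∀ i j, i ≠ j → Disjoint (Hc i) (Hc j))
    (hHccover : (⋃ i, Hc i) = H \ Z')
    (hHcnocross : ∀ i j, i ≠ j → crossEdges ends (Hc i) (Hc j) = ∅)
    -- e i is the number of edges connecting Hc i to (Z ∪ H) \ Hc i
    (he : ∀ i, (crossEdges ends (Hc i) ((Z ∪ H) \ Hc i)).ncard = e i) :
    ((m₀ : ℤ) - 1 ≤ ∑ i : Fin l, ((e i : ℤ) - 1)) ∧ (3 ≤ (m₀ : ℤ) - 1) ∧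
      ((∃ i, 4 ≤ e i) ∨ ∃ i j, i ≠ j ∧ 2 ≤ e i ∧ 2 ≤ e j) := by
  classical
  open Aux13 in
  have main : (m₀ : ℤ) - 1 ≤ ∑ i : Fin l, ((e i : ℤ) - 1) := by
    set P : Set V := H ∩ Z' with hPdef
    have hPH : P ⊆ H := Set.inter_subset_left
    have hPZ' : P ⊆ Z' := Set.inter_subset_right
    have hZP : Disjoint Z P := hHZ.mono_right hPH
    have hHcsub : ∀ i, Hc i ⊆ H \ Z' := fun i => hHccover ▸ Set.subset_iUnion Hc i
    have hHcH : ∀ i, Hc i ⊆ H := fun i => (hHcsub i).trans Set.diff_subset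
    have hHcP : ∀ i, Disjoint P (Hc i) := by
      intro i
      rw [Set.disjoint_left]
      intro v hv hv2
      exact (hHcsub i hv2).2 (hPZ' hv)
    have hUH : (⋃ i, Hc i) ⊆ H := Set.iUnion_subset hHcH
    have hZU : Disjoint Z (⋃ i, Hc i) := hHZ.mono_right hUH
    have hPU : Disjoint P (⋃ i, Hc i) := Set.disjoint_iUnion_right.2 hHcP
    have hZHc : ∀ i, Disjoint Z (Hc i) := fun i => hHZ.mono_right (hHcH i)
    have hPUH : P ∪ (⋃ i, Hc i) = H := by
      rw [hPdef, hHccover]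
      exact Set.inter_union_diff H Z'
    -- (1) e i = a i + f i
    have h1 : ∀ i, e i = (crossEdges ends (Hc i) Z).ncard + (crossEdges ends (Hc i) P).ncard := by
      intro i
      rw [← he i]
      have hset : crossEdges ends (Hc i) ((Z ∪ H) \ Hc i)
          = crossEdges ends (Hc i) Z ∪ crossEdges ends (Hc i) P := by
        apply Set.Subset.antisymm
        · rintro ε (⟨h1', h2'⟩ | ⟨h1', h2'⟩)
          · rcases h2'.1 with hz | hh
            · exact Or.inl (Or.inl ⟨h1', hz⟩)
            · by_cases hz' : (ends ε).2 ∈ Z'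
              · exact Or.inr (Or.inl ⟨h1', ⟨hh, hz'⟩⟩)
              · have hm2 : (ends ε).2 ∈ ⋃ i, Hc i := by
                  rw [hHccover]; exact ⟨hh, hz'⟩
                obtain ⟨j, hj⟩ := Set.mem_iUnion.1 hm2
                have hij : i ≠ j := fun hij => h2'.2 (hij ▸ hj)
                have hmem : ε ∈ crossEdges ends (Hc i) (Hc j) := Or.inl ⟨h1', hj⟩
                rw [hHcnocross i j hij] at hmem
                exact hmem.elim
          · rcases h1'.1 with hz | hh
            · exact Or.inl (Or.inr ⟨hz, h2'⟩)
            · by_cases hz' : (ends ε).1 ∈ Z'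
              · exact Or.inr (Or.inr ⟨⟨hh, hz'⟩, h2'⟩)
              · have hm2 : (ends ε).1 ∈ ⋃ i, Hc i := by
                  rw [hHccover]; exact ⟨hh, hz'⟩
                obtain ⟨j, hj⟩ := Set.mem_iUnion.1 hm2
                have hij : i ≠ j := fun hij => h1'.2 (hij ▸ hj)
                have hmem : ε ∈ crossEdges ends (Hc i) (Hc j) := Or.inr ⟨hj, h2'⟩
                rw [hHcnocross i j hij] at hmem
                exact hmem.elim
        · apply Set.union_subset
          · apply crossEdges_mono_right
            intro z hz
            exact ⟨Or.inl hz, Set.disjoint_left.1 (hZHc i) hz⟩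
          · apply crossEdges_mono_right
            intro p hp
            exact ⟨Or.inr (hPH hp), Set.disjoint_left.1 (hHcP i) hp⟩
      rw [hset]
      exact Set.ncard_union_eq (crossEdges_disjoint hZP ((hZHc i).symm) ((hHcP i).symm))
        (Set.toFinite _) (Set.toFinite _)
    -- (2) m₀ = B + A
    have h2 : m₀ = (crossEdges ends Z P).ncard + (crossEdges ends Z (⋃ i, Hc i)).ncard := by
      rw [← hm₀, ← hPUH, crossEdges_union_right]
      exact Set.ncard_union_eq (crossEdges_disjoint hPU hZP hZU)
        (Set.toFinite _) (Set.toFinite _)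
    -- (3) A = Σ a i
    have h3 : (crossEdges ends Z (⋃ i, Hc i)).ncard = ∑ i, (crossEdges ends (Hc i) Z).ncard := by
      rw [crossEdges_iUnion_right]
      rw [ncard_iUnion _ fun i j hij => crossEdges_disjoint (hHcdisj i j hij) (hZHc i) (hZHc j)]
      exact Finset.sum_congr rfl fun i _ => by rw [crossEdges_comm]
    -- (4) E_H = E_P + Σ E_i + Σ f_i
    have hEU : (edgesIn ends (⋃ i, Hc i)).ncard = ∑ i, (edgesIn ends (Hc i)).ncard := by
      have hset : edgesIn ends (⋃ i, Hc i) = ⋃ i, edgesIn ends (Hc i) := by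
        apply Set.Subset.antisymm
        · rintro ε ⟨ha, hb⟩
          obtain ⟨i, hi⟩ := Set.mem_iUnion.1 ha
          obtain ⟨j, hj⟩ := Set.mem_iUnion.1 hb
          by_cases hij : i = j
          · subst hij; exact Set.mem_iUnion.2 ⟨i, hi, hj⟩
          · have hmem : ε ∈ crossEdges ends (Hc i) (Hc j) := Or.inl ⟨hi, hj⟩
            rw [hHcnocross i j hij] at hmem
            exact hmem.elim
        · exact Set.iUnion_subset fun i => edgesIn_mono (Set.subset_iUnion Hc i)
      rw [hset]
      exact ncard_iUnion _ fun i j hij => edgesIn_disjoint_of_disjoint (hHcdisj i j hij)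
    have hPUcross : (crossEdges ends P (⋃ i, Hc i)).ncard = ∑ i, (crossEdges ends (Hc i) P).ncard := by
      rw [crossEdges_iUnion_right]
      rw [ncard_iUnion _ fun i j hij =>
        crossEdges_disjoint (hHcdisj i j hij) (hHcP i) (hHcP j)]
      exact Finset.sum_congr rfl fun i _ => by rw [crossEdges_comm]
    have h4 : (edgesIn ends H).ncard = (edgesIn ends P).ncard
        + (∑ i, (edgesIn ends (Hc i)).ncard) + ∑ i, (crossEdges ends (Hc i) P).ncard := by
      rw [← hPUH, ncard_edgesIn_union hPU, hEU, hPUcross]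
    -- (5) V_H = V_P + Σ V_i
    have hVU : (⋃ i, Hc i).ncard = ∑ i, (Hc i).ncard := ncard_iUnion _ hHcdisj
    have h5 : H.ncard = P.ncard + ∑ i, (Hc i).ncard := by
      rw [← hPUH, Set.ncard_union_eq hPU (Set.toFinite _) (Set.toFinite _), hVU]
    -- (6) key inequality
    have h6 := key_ineq ends Z H Z' l Hc hZcon hHcon hHZ hZ'con hZ'0 hZZ' hHZ'
      hHccon hHcdisj hHccover
    -- assemble
    have hgsum : ∑ i, (((edgesIn ends (Hc i)).ncard : ℤ) - ((Hc i).ncard : ℤ) + 1)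
        = ((∑ i, (edgesIn ends (Hc i)).ncard : ℕ) : ℤ)
          - ((∑ i, (Hc i).ncard : ℕ) : ℤ) + l := by
      rw [Finset.sum_add_distrib, Finset.sum_sub_distrib]
      push_cast
      simp
    have hesum : ∑ i : Fin l, ((e i : ℤ) - 1) = ((∑ i, e i : ℕ) : ℤ) - l := by
      rw [Finset.sum_sub_distrib]
      push_cast
      simp
    have heab : (∑ i, e i) = (∑ i, (crossEdges ends (Hc i) Z).ncard)
        + ∑ i, (crossEdges ends (Hc i) P).ncard := by
      rw [← Finset.sum_add_distrib]
      exact Finset.sum_congr rfl fun i _ => h1 i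
    rw [hgsum] at h6
    rw [hesum]
    have h4' : ((edgesIn ends H).ncard : ℤ) = ((edgesIn ends P).ncard : ℤ)
        + ((∑ i, (edgesIn ends (Hc i)).ncard : ℕ) : ℤ)
        + ((∑ i, (crossEdges ends (Hc i) P).ncard : ℕ) : ℤ) := by exact_mod_cast h4
    have h5' : (H.ncard : ℤ) = (P.ncard : ℤ) + ((∑ i, (Hc i).ncard : ℕ) : ℤ) := by
      exact_mod_cast h5
    have h2' : (m₀ : ℤ) = ((crossEdges ends Z P).ncard : ℤ)
        + ((crossEdges ends Z (⋃ i, Hc i)).ncard : ℤ) := by exact_mod_cast h2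
    have h3' : ((crossEdges ends Z (⋃ i, Hc i)).ncard : ℤ)
        = ((∑ i, (crossEdges ends (Hc i) Z).ncard : ℕ) : ℤ) := by exact_mod_cast h3
    have heab' : ((∑ i, e i : ℕ) : ℤ)
        = ((∑ i, (crossEdges ends (Hc i) Z).ncard : ℕ) : ℤ)
          + ((∑ i, (crossEdges ends (Hc i) P).ncard : ℕ) : ℤ) := by exact_mod_cast heab
    linarith
  have hm4 : (4 : ℤ) ≤ (m₀ : ℤ) := by exact_mod_cast hm₀4
  refine ⟨main, by linarith, ?_⟩
  -- the combinatorial consequence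
  have h3 : (3 : ℤ) ≤ ∑ i : Fin l, ((e i : ℤ) - 1) := by linarith
  by_contra hcon
  have hno4 : ∀ i, e i ≤ 3 := fun i => by
    by_contra h
    exact hcon (Or.inl ⟨i, by omega⟩)
  have hno2 : ∀ i j, i ≠ j → 2 ≤ e i → 2 ≤ e j → False :=
    fun i j hij ha hb => hcon (Or.inr ⟨i, j, hij, ha, hb⟩)
  by_cases hex : ∃ i₀, 2 ≤ e i₀
  · obtain ⟨i₀, hi₀⟩ := hex
    have hbound : ∑ i : Fin l, ((e i : ℤ) - 1) ≤ 2 := by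
      rw [← Finset.sum_erase_add Finset.univ _ (Finset.mem_univ i₀)]
      have hrest : ∑ i ∈ Finset.univ.erase i₀, ((e i : ℤ) - 1) ≤ 0 := by
        apply Finset.sum_nonpos
        intro j hj
        have hj' : j ≠ i₀ := Finset.ne_of_mem_erase hj
        have hj1 : e j ≤ 1 := by
          by_contra h
          exact hno2 j i₀ hj' (by omega) hi₀
        have : ((e j : ℤ)) ≤ 1 := by exact_mod_cast hj1
        linarith
      have hi3 : ((e i₀ : ℤ)) ≤ 3 := by exact_mod_cast hno4 i₀
      linarith
    linarith
  · push_neg at hex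
    have hbound : ∑ i : Fin l, ((e i : ℤ) - 1) ≤ 0 := by
      apply Finset.sum_nonpos
      intro j _
      have hj1 : e j ≤ 1 := by
        have := hex j
        omega
      have : ((e j : ℤ)) ≤ 1 := by exact_mod_cast hj1
      linarith
    linarith
end
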